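/- arXiv:1503.06081 — 7 statements merged into one kernel-verified Lean document; each statement's English description precedes it below -/
import Mathlib

section
/- Let S be a factorial set of words over a finite alphabet A, with factor complexity p_n = Card(S ∩ A^n), first difference s_n = p_{n+1} − p_n and second difference b_n = s_{n+1} − s_n. Then for all n ≥ 0 one has b_n = Σ_{w ∈ S ∩ A^n} m_S(w) and s_n = Σ_{w ∈ S ∩ A^n} (r_S(w) − 1). -/
namespace Paper

variable {A : Type*}

/-- A set of words is factorial if it contains all factors (infixes) of its elements. -/
def Factorial (S : Set (List A)) : Prop :=
  ∀ u v : List A, u <:+: v → v ∈ S → u ∈ S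

/-- Left extensions: `L_S(w) = {a | aw ∈ S}`. -/
def extL (S : Set (List A)) (w : List A) : Set A := {a | a :: w ∈ S}

/-- Right extensions: `R_S(w) = {a | wa ∈ S}`. -/
def extR (S : Set (List A)) (w : List A) : Set A := {a | w ++ [a] ∈ S}

/-- Two-sided extensions: `E_S(w) = {(a,b) | awb ∈ S}`. -/
def extE (S : Set (List A)) (w : List A) : Set (A × A) := {p | p.1 :: (w ++ [p.2]) ∈ S}

/-- `m_S(w) = e_S(w) - ℓ_S(w) - r_S(w) + 1`. -/
noncomputable def mS (S : Set (List A)) (w : List A) : ℤ :=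
  ((extE S w).ncard : ℤ) - (extL S w).ncard - (extR S w).ncard + 1

/-- A set is neutral if it is factorial and every nonempty word is neutral (`m_S(w) = 0`). -/
def Neutral (S : Set (List A)) : Prop :=
  Factorial S ∧ ∀ w ∈ S, w ≠ [] → mS S w = 0

/-- The characteristic `χ(S) = 1 - m_S(ε)`. -/
noncomputable def chiS (S : Set (List A)) : ℤ := 1 - mS S []

end Paper

open Paper

lemma card_step {A β : Type*} (T U : Finset (List A)) (g : List A → Finset β)
    (f : List A → β → List A)
    (hmem : ∀ w ∈ T, ∀ b ∈ g w, f w b ∈ U)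
    (hinj : ∀ w₁ ∈ T, ∀ b₁ ∈ g w₁, ∀ w₂ ∈ T, ∀ b₂ ∈ g w₂, f w₁ b₁ = f w₂ b₂ → w₁ = w₂ ∧ b₁ = b₂)
    (hsurj : ∀ v ∈ U, ∃ w ∈ T, ∃ b ∈ g w, f w b = v) :
    U.card = ∑ w ∈ T, (g w).card := by
  rw [← Finset.card_sigma]
  refine (Finset.card_bij (fun p _ => f p.1 p.2) ?_ ?_ ?_).symm
  · rintro ⟨w, b⟩ hp
    simp only [Finset.mem_sigma] at hp
    exact hmem w hp.1 b hp.2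
  · rintro ⟨w₁, b₁⟩ h₁ ⟨w₂, b₂⟩ h₂ h
    simp only [Finset.mem_sigma] at h₁ h₂
    obtain ⟨h, h'⟩ := hinj w₁ h₁.1 b₁ h₁.2 w₂ h₂.1 b₂ h₂.2 h
    subst h; subst h'; rfl
  · intro v hv
    obtain ⟨w, hw, b, hb, hfb⟩ := hsurj v hv
    exact ⟨⟨w, b⟩, Finset.mem_sigma.2 ⟨hw, hb⟩, hfb⟩


open Paper in
/-- Proposition 3.5 of Cassaigne: for a factorial set,
`b_n = Σ_{w ∈ S ∩ A^n} m_S(w)` and `s_n = Σ_{w ∈ S ∩ A^n} (r_S(w) - 1)`,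
where `p_n = Card(S ∩ A^n)`, `s_n = p_{n+1} - p_n`, `b_n = s_{n+1} - s_n`. -/
theorem cassaigne_first_and_second_differences
    {A : Type*} [Fintype A] (S : Set (List A)) (hS : Factorial S) :
    ∀ n : ℕ,
      ((((S ∩ {w | w.length = n + 2}).ncard : ℤ) - ((S ∩ {w | w.length = n + 1}).ncard : ℤ)) -
        (((S ∩ {w | w.length = n + 1}).ncard : ℤ) - ((S ∩ {w | w.length = n}).ncard : ℤ))
          = ∑ᶠ w ∈ S ∩ {w : List A | w.length = n}, mS S w) ∧
      (((S ∩ {w | w.length = n + 1}).ncard : ℤ) - ((S ∩ {w | w.length = n}).ncard : ℤ)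
          = ∑ᶠ w ∈ S ∩ {w : List A | w.length = n}, (((extR S w).ncard : ℤ) - 1)) := by
  
  classical
  intro n
  have hfin : ∀ m : ℕ, (S ∩ {w : List A | w.length = m}).Finite :=
    fun m => (List.finite_length_eq A m).inter_of_right S
  set T := (hfin n).toFinset with hT
  have hmemT : ∀ w : List A, w ∈ T ↔ w ∈ S ∧ w.length = n := by
    intro w; rw [hT, Set.Finite.mem_toFinset]; rfl
  have hmemU : ∀ m : ℕ, ∀ v : List A, v ∈ (hfin m).toFinset ↔ v ∈ S ∧ v.length = m := by
    intro m v; rw [Set.Finite.mem_toFinset]; rfl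
  -- right extensions count
  have hR : (hfin (n+1)).toFinset.card
      = ∑ w ∈ T, ((Set.toFinite (extR S w)).toFinset).card := by
    apply card_step T _ _ (fun w a => w ++ [a])
    · intro w hw a ha
      rw [Set.Finite.mem_toFinset] at ha
      rw [hmemU]
      exact ⟨ha, by simp [(hmemT w).1 hw |>.2]⟩
    · intro w₁ _ b₁ _ w₂ _ b₂ _ h
      obtain ⟨h1, h2⟩ := List.append_inj' h rfl
      exact ⟨h1, by simpa using h2⟩
    · intro v hv
      obtain ⟨hvS, hvl⟩ := (hmemU _ v).1 hv
      have hne : v ≠ [] := by intro h; simp [h] at hvl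
      refine ⟨v.dropLast, ?_, v.getLast hne, ?_, List.dropLast_append_getLast hne⟩
      · rw [hmemT]
        exact ⟨hS _ _ (List.dropLast_prefix v).isInfix hvS, by simp [hvl]⟩
      · rw [Set.Finite.mem_toFinset]
        show v.dropLast ++ [v.getLast hne] ∈ S
        rw [List.dropLast_append_getLast hne]; exact hvS
  -- left extensions count
  have hL : (hfin (n+1)).toFinset.card
      = ∑ w ∈ T, ((Set.toFinite (extL S w)).toFinset).card := by
    apply card_step T _ _ (fun w a => a :: w)
    · intro w hw a ha
      rw [Set.Finite.mem_toFinset] at ha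
      rw [hmemU]
      exact ⟨ha, by simp [(hmemT w).1 hw |>.2]⟩
    · intro w₁ _ b₁ _ w₂ _ b₂ _ h
      exact ⟨(List.cons.injEq _ _ _ _ ▸ h).2, (List.cons.injEq _ _ _ _ ▸ h).1⟩
    · intro v hv
      obtain ⟨hvS, hvl⟩ := (hmemU _ v).1 hv
      have hne : v ≠ [] := by intro h; simp [h] at hvl
      refine ⟨v.tail, ?_, v.head hne, ?_, List.cons_head_tail hne⟩
      · rw [hmemT]
        exact ⟨hS _ _ (List.tail_suffix v).isInfix hvS, by simp [hvl]⟩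
      · rw [Set.Finite.mem_toFinset]
        show v.head hne :: v.tail ∈ S
        rw [List.cons_head_tail hne]; exact hvS
  -- two-sided extensions count
  have hE : (hfin (n+2)).toFinset.card
      = ∑ w ∈ T, ((Set.toFinite (extE S w)).toFinset).card := by
    apply card_step T _ _ (fun w p => p.1 :: (w ++ [p.2]))
    · intro w hw p hp
      rw [Set.Finite.mem_toFinset] at hp
      rw [hmemU]
      exact ⟨hp, by simp [(hmemT w).1 hw |>.2]⟩
    · intro w₁ _ b₁ _ w₂ _ b₂ _ h
      rw [List.cons.injEq] at h
      obtain ⟨h1, h2⟩ := List.append_inj' h.2 rfl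
      refine ⟨h1, Prod.ext h.1 (by simpa using h2)⟩
    · intro v hv
      obtain ⟨hvS, hvl⟩ := (hmemU _ v).1 hv
      have hne : v ≠ [] := by intro h; simp [h] at hvl
      have htl : v.tail.length = n + 1 := by simp [hvl]
      have hne' : v.tail ≠ [] := by intro h; simp [h] at htl
      refine ⟨v.tail.dropLast, ?_, (v.head hne, v.tail.getLast hne'), ?_, ?_⟩
      · rw [hmemT]
        refine ⟨hS _ _ ?_ hvS, by simp [htl]⟩
        exact ((List.dropLast_prefix v.tail).isInfix).trans (List.tail_suffix v).isInfix
      · rw [Set.Finite.mem_toFinset]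
        show v.head hne :: (v.tail.dropLast ++ [v.tail.getLast hne']) ∈ S
        rw [List.dropLast_append_getLast hne', List.cons_head_tail hne]; exact hvS
      · show v.head hne :: (v.tail.dropLast ++ [v.tail.getLast hne']) = v
        rw [List.dropLast_append_getLast hne', List.cons_head_tail hne]
  -- convert to ncard / integer equalities
  have e1 : ((S ∩ {w : List A | w.length = n+2}).ncard : ℤ)
      = ∑ w ∈ T, ((extE S w).ncard : ℤ) := by
    rw [Set.ncard_eq_toFinset_card _ (hfin (n+2)), hE]
    push_cast
    exact Finset.sum_congr rfl fun w _ => by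
      rw [Set.ncard_eq_toFinset_card _ (Set.toFinite (extE S w))]
  have e2 : ((S ∩ {w : List A | w.length = n+1}).ncard : ℤ)
      = ∑ w ∈ T, ((extR S w).ncard : ℤ) := by
    rw [Set.ncard_eq_toFinset_card _ (hfin (n+1)), hR]
    push_cast
    exact Finset.sum_congr rfl fun w _ => by
      rw [Set.ncard_eq_toFinset_card _ (Set.toFinite (extR S w))]
  have e3 : ((S ∩ {w : List A | w.length = n+1}).ncard : ℤ)
      = ∑ w ∈ T, ((extL S w).ncard : ℤ) := by
    rw [Set.ncard_eq_toFinset_card _ (hfin (n+1)), hL]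
    push_cast
    exact Finset.sum_congr rfl fun w _ => by
      rw [Set.ncard_eq_toFinset_card _ (Set.toFinite (extL S w))]
  have e4 : ((S ∩ {w : List A | w.length = n}).ncard : ℤ) = ∑ _w ∈ T, (1 : ℤ) := by
    rw [Set.ncard_eq_toFinset_card _ (hfin n), Finset.sum_const, nsmul_eq_mul, mul_one]
  have hlr : ∑ w ∈ T, ((extL S w).ncard : ℤ) = ∑ w ∈ T, ((extR S w).ncard : ℤ) :=
    e3.symm.trans e2
  have hcoe : (T : Set (List A)) = S ∩ {w : List A | w.length = n} := (hfin n).coe_toFinset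
  constructor
  · rw [e1, e2, e4, ← hcoe, finsum_mem_coe_finset]
    simp only [mS]
    rw [Finset.sum_add_distrib, Finset.sum_sub_distrib, Finset.sum_sub_distrib]
    linarith [hlr]
  · rw [e2, e4, ← hcoe, finsum_mem_coe_finset, Finset.sum_sub_distrib]
end

section
/- Let S be a biextendable neutral set over a finite alphabet A with A ⊆ S. Then for every x ∈ S one has λ_S(x) ≥ 0 and ρ_S(x) ≥ 0, and moreover Σ_{a ∈ L_S(x)} ρ_S(ax) = ρ_S(x) and Σ_{a ∈ R_S(x)} λ_S(xa) = λ_S(x). -/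
namespace Paper

/-- A factorial set is biextendable if every word of it is biextendable, i.e. `e_S(w) > 0`. -/
def Biextendable {A : Type*} (S : Set (List A)) : Prop :=
  Factorial S ∧ ∀ w ∈ S, (extE S w).Nonempty

/-- `ρ_S(x) = e_S(x) - ℓ_S(x)`. -/
noncomputable def rhoS {A : Type*} (S : Set (List A)) (w : List A) : ℤ :=
  ((extE S w).ncard : ℤ) - (extL S w).ncard

/-- `λ_S(x) = e_S(x) - r_S(x)`. -/
noncomputable def lamS {A : Type*} (S : Set (List A)) (w : List A) : ℤ :=
  ((extE S w).ncard : ℤ) - (extR S w).ncard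

end Paper

namespace RhoLamAux
open Paper

variable {A : Type*} [Fintype A] {S : Set (List A)}

lemma ncard_sigma_helper {α : Type*} [Fintype α] (f : α → Set A) :
    Nat.card (Σ a : α, ↥(f a)) = ∑ a : α, (f a).ncard := by
  classical
  rw [Nat.card_eq_fintype_card, Fintype.card_sigma]
  simp [← Nat.card_coe_set_eq, Nat.card_eq_fintype_card]

lemma ncardE_R (S : Set (List A)) (x : List A) :
    (extE S x).ncard = ∑ a : A, (extR S (a :: x)).ncard := by
  have e : ↥(extE S x) ≃ Σ a : A, ↥(extR S (a :: x)) :=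
    { toFun := fun p => ⟨p.1.1, p.1.2, p.2⟩
      invFun := fun q => ⟨(q.1, q.2.1), q.2.2⟩
      left_inv := fun p => rfl
      right_inv := fun q => rfl }
  rw [← Nat.card_coe_set_eq, Nat.card_congr e, ncard_sigma_helper]

lemma ncardE_L (S : Set (List A)) (x : List A) :
    (extE S x).ncard = ∑ b : A, (extL S (x ++ [b])).ncard := by
  have e : ↥(extE S x) ≃ Σ b : A, ↥(extL S (x ++ [b])) :=
    { toFun := fun p => ⟨p.1.2, p.1.1, p.2⟩
      invFun := fun q => ⟨(q.2.1, q.1), q.2.2⟩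
      left_inv := fun p => rfl
      right_inv := fun q => rfl }
  rw [← Nat.card_coe_set_eq, Nat.card_congr e, ncard_sigma_helper]

omit [Fintype A] in
lemma extR_cons_empty (hF : Factorial S) {x : List A} {a : A} (ha : a ∉ extL S x) :
    extR S (a :: x) = ∅ := by
  ext b
  simp only [Set.mem_empty_iff_false, iff_false]
  intro hb
  exact ha (hF (a :: x) ((a :: x) ++ [b]) ⟨[], [b], by simp⟩ hb)

omit [Fintype A] in
lemma extL_append_empty (hF : Factorial S) {x : List A} {b : A} (hb : b ∉ extR S x) :
    extL S (x ++ [b]) = ∅ := by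
  ext a
  simp only [Set.mem_empty_iff_false, iff_false]
  intro ha
  exact hb (hF (x ++ [b]) (a :: (x ++ [b])) ⟨[a], [], by simp⟩ ha)

omit [Fintype A] in
lemma extR_nonempty (hF : Factorial S) (hbi : ∀ w ∈ S, (extE S w).Nonempty)
    {w : List A} (hw : w ∈ S) : (extR S w).Nonempty := by
  obtain ⟨⟨c, b⟩, h⟩ := hbi w hw
  exact ⟨b, hF (w ++ [b]) (c :: (w ++ [b])) ⟨[c], [], by simp⟩ h⟩

omit [Fintype A] in
lemma extL_nonempty (hF : Factorial S) (hbi : ∀ w ∈ S, (extE S w).Nonempty)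
    {w : List A} (hw : w ∈ S) : (extL S w).Nonempty := by
  obtain ⟨⟨c, b⟩, h⟩ := hbi w hw
  exact ⟨c, hF (c :: w) (c :: (w ++ [b])) ⟨[], [b], by simp⟩ h⟩

/-- `ρ_S(x) = Σ_{a ∈ L(x)} (r_S(ax) - 1)` as a Finset sum. -/
lemma rho_eq_sum (hF : Factorial S) (x : List A) :
    rhoS S x = ∑ a ∈ (Set.toFinite (extL S x)).toFinset,
      (((extR S (a :: x)).ncard : ℤ) - 1) := by
  classical
  have h1 : ((extE S x).ncard : ℤ)
      = ∑ a ∈ (Set.toFinite (extL S x)).toFinset, ((extR S (a :: x)).ncard : ℤ) := by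
    rw [ncardE_R S x]
    push_cast
    rw [← Finset.sum_subset (Finset.subset_univ _)]
    intro a _ ha
    rw [extR_cons_empty hF (by simpa using ha)]
    simp
  have h2 : ((extL S x).ncard : ℤ) = (Set.toFinite (extL S x)).toFinset.card := by
    rw [Set.ncard_eq_toFinset_card _ (Set.toFinite _)]
  rw [rhoS, h1, h2, Finset.sum_sub_distrib]
  simp

/-- `λ_S(x) = Σ_{b ∈ R(x)} (ℓ_S(xb) - 1)` as a Finset sum. -/
lemma lam_eq_sum (hF : Factorial S) (x : List A) :
    lamS S x = ∑ b ∈ (Set.toFinite (extR S x)).toFinset,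
      (((extL S (x ++ [b])).ncard : ℤ) - 1) := by
  classical
  have h1 : ((extE S x).ncard : ℤ)
      = ∑ b ∈ (Set.toFinite (extR S x)).toFinset, ((extL S (x ++ [b])).ncard : ℤ) := by
    rw [ncardE_L S x]
    push_cast
    rw [← Finset.sum_subset (Finset.subset_univ _)]
    intro b _ hb
    rw [extL_append_empty hF (by simpa using hb)]
    simp
  have h2 : ((extR S x).ncard : ℤ) = (Set.toFinite (extR S x)).toFinset.card := by
    rw [Set.ncard_eq_toFinset_card _ (Set.toFinite _)]
  rw [lamS, h1, h2, Finset.sum_sub_distrib]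
  simp

end RhoLamAux

open Paper in
/-- In a biextendable neutral set containing the alphabet, `λ_S(x), ρ_S(x) ≥ 0` and
`Σ_{a ∈ L(x)} ρ_S(ax) = ρ_S(x)`, `Σ_{a ∈ R(x)} λ_S(xa) = λ_S(x)`. -/
theorem rho_lam_of_biextendable_neutral
    {A : Type*} [Fintype A] (S : Set (List A))
    (hN : Neutral S) (hbi : Biextendable S) (hA : ∀ a : A, [a] ∈ S) :
    ∀ x ∈ S,
      0 ≤ lamS S x ∧ 0 ≤ rhoS S x ∧
      (∑ᶠ a ∈ extL S x, rhoS S (a :: x)) = rhoS S x ∧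
      (∑ᶠ a ∈ extR S x, lamS S (x ++ [a])) = lamS S x := by
  classical
  obtain ⟨hF, hm⟩ := hN
  obtain ⟨-, hbi2⟩ := hbi
  intro x hx
  -- membership facts
  have hmemL : ∀ a ∈ (Set.toFinite (extL S x)).toFinset, a :: x ∈ S := by
    intro a ha
    simpa [extL] using (Set.Finite.mem_toFinset _).mp ha
  have hmemR : ∀ b ∈ (Set.toFinite (extR S x)).toFinset, x ++ [b] ∈ S := by
    intro b hb
    simpa [extR] using (Set.Finite.mem_toFinset _).mp hb
  -- each term is nonnegative
  have hrterm : ∀ a ∈ (Set.toFinite (extL S x)).toFinset,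
      (0 : ℤ) ≤ ((extR S (a :: x)).ncard : ℤ) - 1 := by
    intro a ha
    have hne := RhoLamAux.extR_nonempty hF hbi2 (hmemL a ha)
    have : 0 < (extR S (a :: x)).ncard := (Set.ncard_pos (Set.toFinite _)).mpr hne
    omega
  have hlterm : ∀ b ∈ (Set.toFinite (extR S x)).toFinset,
      (0 : ℤ) ≤ ((extL S (x ++ [b])).ncard : ℤ) - 1 := by
    intro b hb
    have hne := RhoLamAux.extL_nonempty hF hbi2 (hmemR b hb)
    have : 0 < (extL S (x ++ [b])).ncard := (Set.ncard_pos (Set.toFinite _)).mpr hne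
    omega
  refine ⟨?_, ?_, ?_, ?_⟩
  · rw [RhoLamAux.lam_eq_sum hF x]
    exact Finset.sum_nonneg hlterm
  · rw [RhoLamAux.rho_eq_sum hF x]
    exact Finset.sum_nonneg hrterm
  · rw [← Set.Finite.coe_toFinset (Set.toFinite (extL S x)), finsum_mem_coe_finset,
      RhoLamAux.rho_eq_sum hF x]
    refine Finset.sum_congr rfl ?_
    intro a ha
    have hax : a :: x ∈ S := hmemL a ha
    have h0 := hm (a :: x) hax (by simp)
    unfold mS at h0
    unfold rhoS
    linarith
  · rw [← Set.Finite.coe_toFinset (Set.toFinite (extR S x)), finsum_mem_coe_finset,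
      RhoLamAux.lam_eq_sum hF x]
    refine Finset.sum_congr rfl ?_
    intro b hb
    have hbx : x ++ [b] ∈ S := hmemR b hb
    have h0 := hm (x ++ [b]) hbx (by simp)
    unfold mS at h0
    unfold lamS
    linarith
end

section
/- Let S be a neutral set over a finite alphabet A with A ⊆ S, and let X ⊆ S be a finite S-maximal suffix code. Then Σ_{x ∈ X} ρ_S(x) = Card(A) − χ(S). -/
namespace Paper

/-- A prefix code: a set of nonempty words, none of which is a proper prefix of another. -/
def PrefixCode {A : Type*} (X : Set (List A)) : Prop :=
  [] ∉ X ∧ ∀ u ∈ X, ∀ v ∈ X, u <+: v → u = v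

/-- A suffix code: a set of nonempty words, none of which is a proper suffix of another. -/
def SuffixCode {A : Type*} (X : Set (List A)) : Prop :=
  [] ∉ X ∧ ∀ u ∈ X, ∀ v ∈ X, u <:+ v → u = v

/-- A bifix code is both a prefix code and a suffix code. -/
def BifixCode {A : Type*} (X : Set (List A)) : Prop :=
  PrefixCode X ∧ SuffixCode X

/-- An `S`-maximal prefix code: a prefix code contained in `S` and not properly contained
in another prefix code contained in `S`. -/
def MaxPrefixCode {A : Type*} (S X : Set (List A)) : Prop :=
  X ⊆ S ∧ PrefixCode X ∧ ∀ Y : Set (List A), PrefixCode Y → Y ⊆ S → X ⊆ Y → X = Y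

/-- An `S`-maximal suffix code. -/
def MaxSuffixCode {A : Type*} (S X : Set (List A)) : Prop :=
  X ⊆ S ∧ SuffixCode X ∧ ∀ Y : Set (List A), SuffixCode Y → Y ⊆ S → X ⊆ Y → X = Y

/-- An `S`-maximal bifix code. -/
def MaxBifixCode {A : Type*} (S X : Set (List A)) : Prop :=
  X ⊆ S ∧ BifixCode X ∧ ∀ Y : Set (List A), BifixCode Y → Y ⊆ S → X ⊆ Y → X = Y

/-- A set `S ≠ {ε}` is recurrent if it is factorial and any two of its words can be
completed into a word of `S`. -/
def Recurrent {A : Type*} (S : Set (List A)) : Prop :=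
  S ≠ {([] : List A)} ∧ Factorial S ∧ ∀ u ∈ S, ∀ w ∈ S, ∃ v : List A, u ++ v ++ w ∈ S

/-- An infinite factorial set is uniformly recurrent if each of its words occurs as a
factor of every long enough word of `S`. -/
def UniformlyRecurrent {A : Type*} (S : Set (List A)) : Prop :=
  S.Infinite ∧ Factorial S ∧
    ∀ u ∈ S, ∃ n : ℕ, 1 ≤ n ∧ ∀ w ∈ S, w.length = n → u <:+: w

/-- Membership in `X^*`: a concatenation of words of `X`. -/
def InStar {A : Type*} (X : Set (List A)) (m : List A) : Prop :=
  ∃ l : List (List A), (∀ u ∈ l, u ∈ X) ∧ l.flatten = m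

/-- The set of parses of `w` with respect to a bifix code `X`: triples `(q, x, p)` with
`w = qxp`, `q` has no suffix in `X`, `x ∈ X^*`, `p` has no prefix in `X`. -/
def Parses {A : Type*} (X : Set (List A)) (w : List A) :
    Set (List A × List A × List A) :=
  {t | t.1 ++ t.2.1 ++ t.2.2 = w ∧ (∀ x ∈ X, ¬ x <:+ t.1) ∧ InStar X t.2.1 ∧
        ∀ x ∈ X, ¬ x <+: t.2.2}

/-- The number of parses `d_X(w)`. -/
noncomputable def dX {A : Type*} (X : Set (List A)) (w : List A) : ℕ :=
  (Parses X w).ncard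

/-- `X` has `S`-degree `n` : `n` is the maximal number of parses with respect to `X`
of a word of `S`. -/
def HasDegree {A : Type*} (S X : Set (List A)) (n : ℕ) : Prop :=
  IsGreatest (dX X '' S) n

/-- `v` is an internal factor of `x`, i.e. `x = uvw` with `u, w` nonempty. -/
def InternalFactor {A : Type*} (v x : List A) : Prop :=
  ∃ u w : List A, u ≠ [] ∧ w ≠ [] ∧ u ++ v ++ w = x

/-- The set `CR_S(X)` of complete first return words to `X` in `S`: words of `S` with a
proper prefix in `X`, a proper suffix in `X` and no internal factor in `X`. -/
def CR {A : Type*} (S X : Set (List A)) : Set (List A) :=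
  {w ∈ S | (∃ x ∈ X, x <+: w ∧ x ≠ w) ∧ (∃ x ∈ X, x <:+ w ∧ x ≠ w) ∧
    ∀ v : List A, InternalFactor v w → v ∉ X}

end Paper


namespace RhoAux
open Paper

variable {A : Type*} [Fintype A]

private lemma extR_empty {S : Set (List A)} (hF : Factorial S) {w : List A} (hw : w ∉ S) :
    extR S w = ∅ := by
  ext b
  simp only [extR, Set.mem_setOf_eq, Set.mem_empty_iff_false, iff_false]
  intro h
  exact hw (hF w (w ++ [b]) (List.prefix_append w [b]).isInfix h)

private lemma card_extE (S : Set (List A)) (y : List A) :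
    (extE S y).ncard = ∑ c : A, (extR S (c :: y)).ncard := by
  classical
  rw [Set.ncard_eq_toFinset_card _ (Set.toFinite _)]
  rw [Finset.card_eq_sum_card_fiberwise (f := Prod.fst) (t := Finset.univ)
    (fun x _ => Finset.mem_univ _)]
  refine Finset.sum_congr rfl fun c _ => ?_
  rw [Set.ncard_eq_toFinset_card _ (Set.toFinite _)]
  apply Finset.card_bij (fun p _ => p.2)
  · intro p hp
    simp only [Finset.mem_filter, Set.Finite.mem_toFinset] at hp ⊢
    obtain ⟨hp1, hp2⟩ := hp
    have : (c, p.2) ∈ extE S y := by rw [← hp2]; exact hp1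
    exact this
  · intro p hp q hq h
    simp only [Finset.mem_filter, Set.Finite.mem_toFinset] at hp hq
    exact Prod.ext (hp.2.trans hq.2.symm) h
  · intro b hb
    simp only [Set.Finite.mem_toFinset] at hb
    refine ⟨(c, b), ?_, rfl⟩
    simp only [Finset.mem_filter, Set.Finite.mem_toFinset]
    exact ⟨hb, trivial⟩

private lemma sum_rho_cons {S : Set (List A)} (hN : Neutral S) (y : List A) :
    ∑ᶠ c ∈ extL S y, rhoS S (c :: y) = rhoS S y := by
  classical
  have hLfin : (extL S y).Finite := Set.toFinite _
  rw [← Set.Finite.coe_toFinset hLfin, finsum_mem_coe_finset]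
  have hterm : ∀ c ∈ hLfin.toFinset, rhoS S (c :: y) = ((extR S (c :: y)).ncard : ℤ) - 1 := by
    intro c hc
    rw [Set.Finite.mem_toFinset] at hc
    have h0 := hN.2 _ hc (by simp)
    unfold mS at h0
    unfold rhoS
    linarith
  rw [Finset.sum_congr rfl hterm, Finset.sum_sub_distrib]
  have h1 : ∑ c ∈ hLfin.toFinset, ((extR S (c :: y)).ncard : ℤ)
      = ((extE S y).ncard : ℤ) := by
    rw [card_extE S y]
    push_cast
    refine Finset.sum_subset (Finset.subset_univ _) fun c _ hc => ?_
    rw [Set.Finite.mem_toFinset] at hc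
    rw [extR_empty hN.1 hc]
    simp
  have h2 : ∑ _c ∈ hLfin.toFinset, (1 : ℤ) = ((extL S y).ncard : ℤ) := by
    rw [Finset.sum_const, Set.ncard_eq_toFinset_card _ hLfin]
    simp
  rw [h1, h2]
  rfl

private lemma main_ind {S : Set (List A)} (hN : Neutral S) (hA : ∀ a : A, [a] ∈ S) :
    ∀ (n : ℕ) (X : Set (List A)) (hXfin : X.Finite), MaxSuffixCode S X →
      ∑ x ∈ hXfin.toFinset, x.length = n → ∑ᶠ x ∈ X, rhoS S x = rhoS S [] := by
  intro n
  induction n using Nat.strong_induction_on with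
  | _ n IH =>
  intro X hXfin hX hsum
  classical
  by_cases hall : ∀ x ∈ X, x.length = 1
  · -- base case: X is the alphabet
    have hXeq : X = (fun a : A => [a]) '' Set.univ := by
      apply Set.Subset.antisymm
      · intro x hx
        have h1 := hall x hx
        cases x with
        | nil => simp at h1
        | cons a t =>
          cases t with
          | nil => exact ⟨a, Set.mem_univ a, rfl⟩
          | cons b t => simp at h1
      · rintro _ ⟨a, -, rfl⟩
        by_contra hnot
        have hY : SuffixCode (X ∪ {[a]}) := by
          constructor
          · rintro (h | h)
            · exact hX.2.1.1 h
            · simp at h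
          · intro u hu v hv huv
            have hu1 : u.length = 1 := by
              rcases hu with hu | hu
              · exact hall u hu
              · rw [Set.mem_singleton_iff] at hu; rw [hu]; rfl
            have hv1 : v.length = 1 := by
              rcases hv with hv | hv
              · exact hall v hv
              · rw [Set.mem_singleton_iff] at hv; rw [hv]; rfl
            exact huv.eq_of_length (hu1.trans hv1.symm)
        have hYS : X ∪ {[a]} ⊆ S := by
          rintro z (hz | hz)
          · exact hX.1 hz
          · rw [Set.mem_singleton_iff] at hz; rw [hz]; exact hA a
        have heq := hX.2.2 _ hY hYS Set.subset_union_left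
        exact hnot (by rw [heq]; exact Set.mem_union_right _ rfl)
    rw [hXeq, finsum_mem_image (fun a _ b _ h => by simpa using h)]
    have hL : extL S ([] : List A) = Set.univ := Set.eq_univ_of_forall fun a => hA a
    rw [← hL]
    exact sum_rho_cons hN []
  · -- inductive step
    push_neg at hall
    obtain ⟨x1, hx1X, hx1len⟩ := hall
    have hXne : hXfin.toFinset.Nonempty := ⟨x1, hXfin.mem_toFinset.mpr hx1X⟩
    obtain ⟨x0, hx0T, hx0max⟩ := Finset.exists_max_image hXfin.toFinset List.length hXne
    rw [Set.Finite.mem_toFinset] at hx0T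
    have hx0max' : ∀ v ∈ X, v.length ≤ x0.length :=
      fun v hv => hx0max v (hXfin.mem_toFinset.mpr hv)
    have hx0len : 2 ≤ x0.length := by
      have h1 := hx1len
      have h2 := hx0max' x1 hx1X
      have hne : x1 ≠ [] := fun h => hX.2.1.1 (h ▸ hx1X)
      have h3 : 0 < x1.length := List.length_pos_iff.mpr hne
      omega
    obtain ⟨b, y, rfl⟩ : ∃ b y, x0 = b :: y := by
      cases x0 with
      | nil => simp at hx0len
      | cons b y => exact ⟨b, y, rfl⟩
    have hyne : y ≠ [] := by
      intro h; rw [h] at hx0len; simp at hx0len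
    have hyS : y ∈ S := hN.1 y (b :: y) (List.suffix_cons b y).isInfix (hX.1 hx0T)
    have hyX : y ∉ X := fun h => by
      have h2 := hX.2.1.2 y h (b :: y) hx0T (List.suffix_cons b y)
      have h3 := congrArg List.length h2
      simp at h3
    set Ly : Set (List A) := (fun c => c :: y) '' extL S y with hLydef
    have hbL : b ∈ extL S y := hX.1 hx0T
    have hLyX : Ly ⊆ X := by
      rintro _ ⟨c, hc, rfl⟩
      by_contra hnot
      have hY : SuffixCode (X ∪ {c :: y}) := by
        constructor
        · rintro (h | h)
          · exact hX.2.1.1 h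
          · simp at h
        · rintro u (hu | hu) v (hv | hv) huv
          · exact hX.2.1.2 u hu v hv huv
          · rw [Set.mem_singleton_iff] at hv
            rw [hv] at huv ⊢
            rcases List.suffix_cons_iff.mp huv with h | h
            · exact h
            · have h3 := hX.2.1.2 u hu (b :: y) hx0T (h.trans (List.suffix_cons b y))
              have hl := h.length_le
              rw [h3] at hl
              simp only [List.length_cons] at hl
              omega
          · rw [Set.mem_singleton_iff] at hu
            rw [hu] at huv ⊢
            have h1 : v.length ≤ (c :: y).length := by
              have := hx0max' v hv
              simpa using this
            exact (huv.eq_of_length (le_antisymm huv.length_le h1))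
          · rw [Set.mem_singleton_iff] at hu hv; rw [hu, hv]
      have hYS : X ∪ {c :: y} ⊆ S := by
        rintro z (hz | hz)
        · exact hX.1 hz
        · rw [Set.mem_singleton_iff] at hz; rw [hz]; exact hc
      have heq := hX.2.2 _ hY hYS Set.subset_union_left
      exact hnot (by rw [heq]; exact Set.mem_union_right _ rfl)
    have hstep : ∀ v : List A, y <:+ v → y ≠ v → ∃ c, (c :: y) <:+ v := by
      rintro v ⟨w, rfl⟩ hne
      rcases List.eq_nil_or_concat w with rfl | ⟨l, a, rfl⟩
      · simp at hne
      · exact ⟨a, l, by simp⟩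
    set X' : Set (List A) := (X \ Ly) ∪ {y} with hX'def
    have hX'fin : X'.Finite := (hXfin.diff).union (Set.finite_singleton y)
    have hinj : Set.InjOn (fun c => c :: y) (extL S y) :=
      fun a _ b _ h => by simpa using h
    have hX'code : SuffixCode X' := by
      constructor
      · rintro (⟨h, -⟩ | h)
        · exact hX.2.1.1 h
        · exact hyne (by simpa using h.symm)
      · rintro u (⟨huX, huL⟩ | hu) v (⟨hvX, hvL⟩ | hv) huv
        · exact hX.2.1.2 u huX v hvX huv
        · rw [Set.mem_singleton_iff] at hv
          rw [hv] at huv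
          have h3 := hX.2.1.2 u huX (b :: y) hx0T (huv.trans (List.suffix_cons b y))
          have hl := huv.length_le
          rw [h3] at hl
          simp only [List.length_cons] at hl
          omega
        · rw [Set.mem_singleton_iff] at hu
          rw [hu] at huv ⊢
          by_cases hyv : y = v
          · exact hyv
          · obtain ⟨c, hcs⟩ := hstep v huv hyv
            have hcL : c ∈ extL S y := hN.1 _ v hcs.isInfix (hX.1 hvX)
            have hcyX : c :: y ∈ X := hLyX ⟨c, hcL, rfl⟩
            have h4 := hX.2.1.2 _ hcyX v hvX hcs
            exact absurd (show v ∈ Ly from ⟨c, hcL, h4⟩) hvL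
        · rw [Set.mem_singleton_iff] at hu hv; rw [hu, hv]
    have hX'S : X' ⊆ S := by
      rintro z (⟨hz, -⟩ | hz)
      · exact hX.1 hz
      · rw [Set.mem_singleton_iff] at hz; rw [hz]; exact hyS
    have hX'max : MaxSuffixCode S X' := by
      refine ⟨hX'S, hX'code, ?_⟩
      intro Z hZcode hZS hX'Z
      have hyZ : y ∈ Z := hX'Z (Set.mem_union_right _ rfl)
      have hZ''code : SuffixCode ((Z \ {y}) ∪ Ly) := by
        constructor
        · rintro (⟨h, -⟩ | h)
          · exact hZcode.1 h
          · obtain ⟨c, -, hc⟩ := h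
            exact List.cons_ne_nil c y hc
        · rintro u (⟨huZ, huy⟩ | hu) v (⟨hvZ, hvy⟩ | hv) huv
          · exact hZcode.2 u huZ v hvZ huv
          · obtain ⟨c, -, rfl⟩ := hv
            rcases List.suffix_cons_iff.mp huv with h | h
            · exact h
            · exact absurd (hZcode.2 u huZ y hyZ h) (by simpa using huy)
          · obtain ⟨c, -, rfl⟩ := hu
            have h := hZcode.2 y hyZ v hvZ ((List.suffix_cons c y).trans huv)
            exact absurd h.symm (by simpa using hvy)
          · obtain ⟨c, -, rfl⟩ := hu
            obtain ⟨d, -, rfl⟩ := hv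
            exact huv.eq_of_length (by simp)
      have hZ''S : (Z \ {y}) ∪ Ly ⊆ S := by
        rintro z (⟨h, -⟩ | ⟨c, hc, rfl⟩)
        · exact hZS h
        · exact hc
      have hXZ'' : X ⊆ (Z \ {y}) ∪ Ly := by
        intro x hx
        by_cases hxL : x ∈ Ly
        · exact Or.inr hxL
        · refine Or.inl ⟨hX'Z (Or.inl ⟨hx, hxL⟩), ?_⟩
          simp only [Set.mem_singleton_iff]
          intro h
          exact hyX (h ▸ hx)
      have hXeq := hX.2.2 _ hZ''code hZ''S hXZ''
      apply Set.Subset.antisymm hX'Z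
      intro z hz
      by_cases hzy : z = y
      · exact Or.inr (by rw [hzy]; rfl)
      · have hzX : z ∈ X := by
          rw [hXeq]
          exact Or.inl ⟨hz, by simpa using hzy⟩
        have hzL : z ∉ Ly := by
          rintro ⟨c, -, rfl⟩
          exact hzy (hZcode.2 y hyZ _ hz (List.suffix_cons c y)).symm
        exact Or.inl ⟨hzX, hzL⟩
    have hLy_fin : Ly.Finite := (Set.toFinite (extL S y)).image _
    have hT'eq : hX'fin.toFinset = insert y (hXfin.toFinset \ hLy_fin.toFinset) := by
      ext z
      simp only [Set.Finite.mem_toFinset, hX'def, Set.mem_union, Set.mem_diff,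
        Set.mem_singleton_iff, Finset.mem_insert, Finset.mem_sdiff]
      tauto
    have hyT : y ∉ hXfin.toFinset \ hLy_fin.toFinset := by
      simp only [Finset.mem_sdiff, Set.Finite.mem_toFinset]
      tauto
    have hLsub : hLy_fin.toFinset ⊆ hXfin.toFinset := by
      intro z hz
      rw [Set.Finite.mem_toFinset] at hz ⊢
      exact hLyX hz
    have hby : b :: y ∈ hLy_fin.toFinset := by
      rw [Set.Finite.mem_toFinset]
      exact ⟨b, hbL, rfl⟩
    have hmeas : ∑ x ∈ hX'fin.toFinset, x.length < n := by
      rw [hT'eq, Finset.sum_insert hyT, ← hsum, ← Finset.sum_sdiff hLsub]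
      have h1 : y.length + 1 ≤ ∑ x ∈ hLy_fin.toFinset, x.length := by
        simpa using Finset.single_le_sum (f := List.length)
          (fun i _ => Nat.zero_le _) hby
      omega
    have himg : ∑ᶠ x ∈ Ly, rhoS S x = rhoS S y := by
      rw [hLydef, finsum_mem_image hinj]
      exact sum_rho_cons hN y
    have hdisj1 : Disjoint (X \ Ly) Ly := Set.disjoint_sdiff_left
    have hdisj2 : Disjoint (X \ Ly) ({y} : Set (List A)) := by
      rw [Set.disjoint_singleton_right]
      intro h
      exact hyX h.1
    calc ∑ᶠ x ∈ X, rhoS S x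
        = ∑ᶠ x ∈ (X \ Ly) ∪ Ly, rhoS S x := by
          rw [Set.diff_union_of_subset hLyX]
      _ = (∑ᶠ x ∈ X \ Ly, rhoS S x) + ∑ᶠ x ∈ Ly, rhoS S x :=
          finsum_mem_union hdisj1 (hXfin.diff) hLy_fin
      _ = (∑ᶠ x ∈ X \ Ly, rhoS S x) + ∑ᶠ x ∈ ({y} : Set (List A)), rhoS S x := by
          rw [himg, finsum_mem_singleton]
      _ = ∑ᶠ x ∈ X', rhoS S x := by
          rw [hX'def, finsum_mem_union hdisj2 (hXfin.diff) (Set.finite_singleton y)]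
      _ = rhoS S [] := IH _ hmeas X' hX'fin hX'max rfl

end RhoAux

open Paper in
/-- In a neutral set `S` containing the alphabet, any finite `S`-maximal suffix code `X`
satisfies `Σ_{x ∈ X} ρ_S(x) = Card(A) - χ(S)`. -/
theorem rho_of_maximal_suffix_code
    {A : Type*} [Fintype A] (S X : Set (List A))
    (hN : Neutral S) (hA : ∀ a : A, [a] ∈ S)
    (hXfin : X.Finite) (hX : MaxSuffixCode S X) :
    (∑ᶠ x ∈ X, rhoS S x) = (Fintype.card A : ℤ) - chiS S := by
  rw [RhoAux.main_ind hN hA _ X hXfin hX rfl]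
  have hR : extR S ([] : List A) = Set.univ := Set.eq_univ_of_forall fun a => hA a
  unfold rhoS chiS mS
  rw [hR, Set.ncard_univ, Nat.card_eq_fintype_card]
  ring
end

section
/- Let S be a recurrent set of words and let X ⊆ S be a finite S-maximal bifix code of S-degree n. Then the set of nonempty proper prefixes of words of X is a disjoint union of n − 1 S-maximal suffix codes. -/
namespace PaperAux

variable {A : Type*}

def Pset (X : Set (List A)) : Set (List A) := {p | ∀ x ∈ X, ¬ x <+: p}
def Qset (X : Set (List A)) : Set (List A) := {q | ∀ x ∈ X, ¬ x <:+ q}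
def SP (X : Set (List A)) (w : List A) : Set (List A) := {p | p <:+ w ∧ p ∈ Pset X}
def QP (X : Set (List A)) (w : List A) : Set (List A) := {q | q <+: w ∧ q ∈ Qset X}

lemma SP_finite (X : Set (List A)) (w : List A) : (SP X w).Finite := by
  apply Set.Finite.subset w.tails.finite_toSet
  intro p hp
  simpa [List.mem_tails] using hp.1

lemma QP_finite (X : Set (List A)) (w : List A) : (QP X w).Finite := by
  apply Set.Finite.subset w.inits.finite_toSet
  intro p hp
  simpa [List.mem_inits] using hp.1

lemma nil_mem_Pset {X : Set (List A)} (hnil : [] ∉ X) : [] ∈ Pset X := by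
  intro x hx hpre
  rw [List.prefix_nil] at hpre
  exact hnil (hpre ▸ hx)

lemma nil_mem_Qset {X : Set (List A)} (hnil : [] ∉ X) : [] ∈ Qset X := by
  intro x hx hsuf
  rw [List.suffix_nil] at hsuf
  exact hnil (hsuf ▸ hx)

lemma exists_right_decomp (X : Set (List A)) (hnil : [] ∉ X) :
    ∀ n (u : List A), u.length ≤ n →
      ∃ q l, (∀ y ∈ l, y ∈ X) ∧ q ++ (l : List (List A)).flatten = u ∧ q ∈ Qset X := by
  intro n
  induction n with
  | zero =>
    intro u hu
    rw [Nat.le_zero, List.length_eq_zero_iff] at hu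
    subst hu
    exact ⟨[], [], by simp, by simp, nil_mem_Qset hnil⟩
  | succ n ih =>
    intro u hu
    by_cases h : ∃ x ∈ X, x <:+ u
    · obtain ⟨x, hx, u', rfl⟩ := h
      have hxne : x ≠ [] := fun h => hnil (h ▸ hx)
      have : u'.length ≤ n := by
        have := List.length_pos_iff.2 hxne
        simp at hu
        omega
      obtain ⟨q, l, hl, hql, hqQ⟩ := ih u' this
      refine ⟨q, l ++ [x], ?_, by simp [← hql], hqQ⟩
      intro y hy
      rcases List.mem_append.1 hy with h' | h'
      · exact hl y h'
      · simp at h'; exact h' ▸ hx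
    · exact ⟨u, [], by simp, by simp, fun x hx hs => h ⟨x, hx, hs⟩⟩

lemma exists_left_decomp (X : Set (List A)) (hnil : [] ∉ X) :
    ∀ n (u : List A), u.length ≤ n →
      ∃ l p, (∀ y ∈ l, y ∈ X) ∧ (l : List (List A)).flatten ++ p = u ∧ p ∈ Pset X := by
  intro n
  induction n with
  | zero =>
    intro u hu
    rw [Nat.le_zero, List.length_eq_zero_iff] at hu
    subst hu
    exact ⟨[], [], by simp, by simp, nil_mem_Pset hnil⟩
  | succ n ih =>
    intro u hu
    by_cases h : ∃ x ∈ X, x <+: u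
    · obtain ⟨x, hx, u', rfl⟩ := h
      have hxne : x ≠ [] := fun h => hnil (h ▸ hx)
      have : u'.length ≤ n := by
        have := List.length_pos_iff.2 hxne
        simp at hu
        omega
      obtain ⟨l, p, hl, hlp, hpP⟩ := ih u' this
      refine ⟨x :: l, p, ?_, by simp [← hlp], hpP⟩
      intro y hy
      rcases List.mem_cons.1 hy with rfl | h'
      · exact hx
      · exact hl y h'
    · exact ⟨[], u, by simp, by simp, fun x hx hs => h ⟨x, hx, hs⟩⟩

lemma right_uniq (X : Set (List A)) (hsuf : ∀ u ∈ X, ∀ v ∈ X, u <:+ v → u = v) :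
    ∀ l l' : List (List A), ∀ q q' : List A, (∀ y ∈ l, y ∈ X) → (∀ y ∈ l', y ∈ X) →
      q ∈ Qset X → q' ∈ Qset X → q ++ l.flatten = q' ++ l'.flatten → q = q' := by
  intro l
  induction l using List.reverseRecOn with
  | nil =>
    intro l' q q' _ hl' hq hq' heq
    rcases l'.eq_nil_or_concat with rfl | ⟨t', y, rfl⟩
    · simpa using heq
    · exfalso
      apply hq y (hl' y (by simp))
      have h2 : q = q' ++ t'.flatten ++ y := by simpa using heq
      rw [h2]
      exact List.suffix_append (q' ++ t'.flatten) y
  | append_singleton t y ihh =>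
    intro l' q q' hl hl' hq hq' heq
    rcases l'.eq_nil_or_concat with rfl | ⟨t', y', rfl⟩
    · exfalso
      apply hq' y (hl y (by simp))
      have h2 : q' = q ++ t.flatten ++ y := by simpa using heq.symm
      rw [h2]
      exact List.suffix_append (q ++ t.flatten) y
    · have heq2 : q ++ t.flatten ++ y = q' ++ t'.flatten ++ y' := by simpa using heq
      have hy : y <:+ q ++ t.flatten ++ y := List.suffix_append _ _
      have hy' : y' <:+ q ++ t.flatten ++ y := heq2 ▸ List.suffix_append _ _
      have hyy' : y = y' := by
        rcases List.suffix_or_suffix_of_suffix hy hy' with h | h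
        · exact hsuf y (hl y (by simp)) y' (hl' y' (by simp)) h
        · exact (hsuf y' (hl' y' (by simp)) y (hl y (by simp)) h).symm
      subst hyy'
      have heq3 : q ++ t.flatten = q' ++ t'.flatten := List.append_cancel_right heq2
      exact ihh t' q q' (fun z hz => hl z (by simp [hz])) (fun z hz => hl' z (by simp [hz])) hq hq' heq3

lemma left_uniq (X : Set (List A)) (hpre : ∀ u ∈ X, ∀ v ∈ X, u <+: v → u = v) :
    ∀ l l' : List (List A), ∀ p p' : List A, (∀ y ∈ l, y ∈ X) → (∀ y ∈ l', y ∈ X) →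
      p ∈ Pset X → p' ∈ Pset X → l.flatten ++ p = l'.flatten ++ p' → p = p' := by
  intro l
  induction l with
  | nil =>
    intro l' p p' _ hl' hp hp' heq
    rcases l' with _ | ⟨y, t'⟩
    · simpa using heq
    · exfalso
      apply hp y (hl' y (by simp))
      have h2 : p = y ++ (t'.flatten ++ p') := by simpa using heq
      rw [h2]
      exact List.prefix_append y _
  | cons y t ihh =>
    intro l' p p' hl hl' hp hp' heq
    rcases l' with _ | ⟨y', t'⟩
    · exfalso
      apply hp' y (hl y (by simp))
      have h2 : p' = y ++ (t.flatten ++ p) := by simpa using heq.symm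
      rw [h2]
      exact List.prefix_append y _
    · have heq2 : y ++ (t.flatten ++ p) = y' ++ (t'.flatten ++ p') := by simpa using heq
      have hy : y <+: y ++ (t.flatten ++ p) := List.prefix_append _ _
      have hy' : y' <+: y ++ (t.flatten ++ p) := heq2 ▸ List.prefix_append _ _
      have hyy' : y = y' := by
        rcases List.prefix_or_prefix_of_prefix hy hy' with h | h
        · exact hpre y (hl y (by simp)) y' (hl' y' (by simp)) h
        · exact (hpre y' (hl' y' (by simp)) y (hl y (by simp)) h).symm
      subst hyy'
      have heq3 : t.flatten ++ p = t'.flatten ++ p' := List.append_cancel_left heq2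
      exact ihh t' p p' (fun z hz => hl z (by simp [hz])) (fun z hz => hl' z (by simp [hz])) hp hp' heq3

end PaperAux

namespace PaperAux2
open PaperAux Paper

variable {A : Type*}

lemma parses_image_SP (X : Set (List A)) (hnil : [] ∉ X) (w : List A) :
    (fun t : List A × List A × List A => t.2.2) '' Parses X w = SP X w := by
  ext p
  constructor
  · rintro ⟨⟨q, x, p⟩, ⟨heq, hq, hx, hp⟩, rfl⟩
    exact ⟨⟨q ++ x, heq⟩, hp⟩
  · rintro ⟨⟨u, rfl⟩, hpP⟩
    obtain ⟨q, l, hl, hql, hqQ⟩ := exists_right_decomp X hnil u.length u le_rfl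
    exact ⟨(q, l.flatten, p), ⟨by rw [← hql], hqQ, ⟨l, hl, rfl⟩, hpP⟩, rfl⟩

lemma parses_injOn_SP (X : Set (List A)) (hsuf : ∀ u ∈ X, ∀ v ∈ X, u <:+ v → u = v)
    (w : List A) :
    Set.InjOn (fun t : List A × List A × List A => t.2.2) (Parses X w) := by
  rintro ⟨q, x, p⟩ ⟨heq, hq, ⟨l, hl, hfl⟩, hp⟩ ⟨q', x', p'⟩ ⟨heq', hq', ⟨l', hl', hfl'⟩, hp'⟩ hpp
  simp only at hpp
  subst hpp
  have h1 : q ++ x = q' ++ x' := List.append_cancel_right (heq.trans heq'.symm)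
  have h2 : q = q' := right_uniq X hsuf l l' q q' hl hl' hq hq' (by rw [hfl, hfl']; exact h1)
  subst h2
  have h3 : x = x' := List.append_cancel_left h1
  simp [h3]

lemma parses_image_QP (X : Set (List A)) (hnil : [] ∉ X) (w : List A) :
    (fun t : List A × List A × List A => t.1) '' Parses X w = QP X w := by
  ext q
  constructor
  · rintro ⟨⟨q, x, p⟩, ⟨heq, hq, hx, hp⟩, rfl⟩
    exact ⟨⟨x ++ p, by rw [← heq]; simp⟩, hq⟩
  · rintro ⟨⟨r, rfl⟩, hqQ⟩
    obtain ⟨l, p, hl, hlp, hpP⟩ := exists_left_decomp X hnil r.length r le_rfl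
    exact ⟨(q, l.flatten, p), ⟨by rw [List.append_assoc, hlp], hqQ, ⟨l, hl, rfl⟩, hpP⟩, rfl⟩

lemma parses_injOn_QP (X : Set (List A)) (hpre : ∀ u ∈ X, ∀ v ∈ X, u <+: v → u = v)
    (w : List A) :
    Set.InjOn (fun t : List A × List A × List A => t.1) (Parses X w) := by
  rintro ⟨q, x, p⟩ ⟨heq, hq, ⟨l, hl, hfl⟩, hp⟩ ⟨q', x', p'⟩ ⟨heq', hq', ⟨l', hl', hfl'⟩, hp'⟩ hqq
  simp only at hqq
  subst hqq
  have h1 : x ++ p = x' ++ p' := by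
    have := heq.trans heq'.symm
    rw [List.append_assoc, List.append_assoc] at this
    exact List.append_cancel_left this
  have h2 : p = p' := left_uniq X hpre l l' p p' hl hl' hp hp' (by rw [hfl, hfl']; exact h1)
  subst h2
  have h3 : x = x' := List.append_cancel_right h1
  simp [h3]

end PaperAux2

namespace PaperAux

lemma SP_nil {A : Type*} {X : Set (List A)} (hnil : [] ∉ X) : SP X [] = {[]} := by
  ext q
  simp only [SP, Set.mem_setOf_eq, Set.mem_singleton_iff, List.suffix_nil]
  constructor
  · exact fun h => h.1
  · rintro rfl; exact ⟨rfl, nil_mem_Pset hnil⟩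

lemma exists_longest {A : Type*} (X : Set (List A)) (hnil : [] ∉ X) (z : List A) :
    ∃ p, p <:+ z ∧ p ∈ Pset X ∧ ∀ q, q <:+ z → q ∈ Pset X → q <:+ p := by
  induction z with
  | nil => exact ⟨[], List.suffix_rfl, nil_mem_Pset hnil, fun q hq _ => hq⟩
  | cons a t ih =>
    by_cases h : (a :: t) ∈ Pset X
    · exact ⟨a :: t, List.suffix_rfl, h, fun q hq _ => hq⟩
    · obtain ⟨p, h1, h2, h3⟩ := ih
      refine ⟨p, h1.trans (List.suffix_cons a t), h2, fun q hq hqP => ?_⟩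
      rcases List.suffix_cons_iff.mp hq with rfl | hq'
      · exact absurd hqP h
      · exact h3 q hq' hqP

lemma SP_eq_of_longest {A : Type*} {X : Set (List A)} {z p : List A}
    (hp : p <:+ z) (hmax : ∀ q, q <:+ z → q ∈ Pset X → q <:+ p) :
    SP X z = SP X p := by
  ext q
  exact ⟨fun ⟨h1, h2⟩ => ⟨hmax q h1 h2, h2⟩, fun ⟨h1, h2⟩ => ⟨h1.trans hp, h2⟩⟩

lemma rank {A : Type*} (X : Set (List A)) (hnil : [] ∉ X) :
    ∀ n (z : List A), z.length ≤ n → ∀ m, 1 ≤ m → m ≤ (SP X z).ncard →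
      ∃ p, p <:+ z ∧ p ∈ Pset X ∧ (SP X p).ncard = m := by
  intro n
  induction n with
  | zero =>
    intro z hz m hm1 hm2
    rw [Nat.le_zero, List.length_eq_zero_iff] at hz
    subst hz
    rw [SP_nil hnil, Set.ncard_singleton] at hm2
    exact ⟨[], List.suffix_rfl, nil_mem_Pset hnil, by
      rw [SP_nil hnil, Set.ncard_singleton]; omega⟩
  | succ n ih =>
    intro z hz m hm1 hm2
    obtain ⟨p, hp, hpP, hmax⟩ := exists_longest X hnil z
    have hSPeq : SP X z = SP X p := SP_eq_of_longest hp hmax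
    by_cases hcase : m = (SP X z).ncard
    · exact ⟨p, hp, hpP, by rw [← hSPeq, hcase]⟩
    · have hmlt : m < (SP X z).ncard := lt_of_le_of_ne hm2 hcase
      have hpne : p ≠ [] := by
        rintro rfl
        rw [hSPeq, SP_nil hnil, Set.ncard_singleton] at hmlt
        omega
      obtain ⟨a, t, rfl⟩ : ∃ a t, p = a :: t := by
        cases p with
        | nil => exact absurd rfl hpne
        | cons a t => exact ⟨a, t, rfl⟩
      have hteq : SP X t = SP X z \ {a :: t} := by
        ext q
        constructor
        · rintro ⟨h1, h2⟩
          refine ⟨⟨(h1.trans (List.suffix_cons a t)).trans hp, h2⟩, ?_⟩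
          intro hq
          rw [Set.mem_singleton_iff] at hq
          subst hq
          have := h1.length_le
          simp at this
        · rintro ⟨⟨h1, h2⟩, hne⟩
          rw [Set.mem_singleton_iff] at hne
          rcases List.suffix_cons_iff.mp (hmax q h1 h2) with rfl | h'
          · exact absurd rfl hne
          · exact ⟨h', h2⟩
      have hmem : (a :: t) ∈ SP X z := ⟨hp, hpP⟩
      have hcard : (SP X t).ncard = (SP X z).ncard - 1 := by
        rw [hteq, Set.ncard_diff_singleton_of_mem hmem]
      have htlen : t.length ≤ n := by
        have := hp.length_le
        simp at this
        omega
      obtain ⟨p', h1, h2, h3⟩ := ih t htlen m hm1 (by omega)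
      exact ⟨p', (h1.trans (List.suffix_cons a t)).trans hp, h2, h3⟩

end PaperAux

open Paper in
/-- For a recurrent set `S` and a finite `S`-maximal bifix code `X` of `S`-degree `n`,
the set of nonempty proper prefixes of `X` is a disjoint union of `n - 1`
`S`-maximal suffix codes. -/
theorem proper_prefixes_union_of_maximal_suffix_codes
    {A : Type*} [Fintype A] (S X : Set (List A)) (n : ℕ)
    (hS : Recurrent S) (hXfin : X.Finite) (hX : MaxBifixCode S X)
    (hdeg : HasDegree S X n) :
    ∃ Y : Fin (n - 1) → Set (List A),
      (∀ i, MaxSuffixCode S (Y i)) ∧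
      Pairwise (Function.onFun Disjoint Y) ∧
      (⋃ i, Y i) = {p : List A | p ≠ [] ∧ ∃ x ∈ X, p <+: x ∧ p ≠ x} := by
  classical
  obtain ⟨hSne, hFac, hRec⟩ := hS
  obtain ⟨hXS, ⟨hXpre, hXsuf⟩, hXmax⟩ := hX
  have hnil : [] ∉ X := hXpre.1
  have hpreC := hXpre.2
  have hsufC := hXsuf.2
  have hdX_SP : ∀ w : List A, dX X w = (PaperAux.SP X w).ncard := by
    intro w
    rw [dX, ← PaperAux2.parses_image_SP X hnil w,
      Set.ncard_image_of_injOn (PaperAux2.parses_injOn_SP X hsufC w)]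
  have hdX_QP : ∀ w : List A, dX X w = (PaperAux.QP X w).ncard := by
    intro w
    rw [dX, ← PaperAux2.parses_image_QP X hnil w,
      Set.ncard_image_of_injOn (PaperAux2.parses_injOn_QP X hpreC w)]
  have hdle : ∀ w ∈ S, dX X w ≤ n := fun w hw => hdeg.2 ⟨w, hw, rfl⟩
  obtain ⟨z0, hz0S, hz0⟩ := hdeg.1
  -- proper prefixes of X are in Pset
  have hPP : ∀ u : List A, (∃ x ∈ X, u <+: x ∧ u ≠ x) → u ∈ PaperAux.Pset X := by
    rintro u ⟨x, hx, hux, hne⟩ x' hx' hx'u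
    have h1 : x' <+: x := hx'u.trans hux
    have h2 : x' = x := hpreC x' hx' x hx h1
    subst h2
    exact hne (hux.eq_of_length (le_antisymm hux.length_le hx'u.length_le))
  -- pumping lemma: every nonempty word of S without prefix in X is a proper prefix of X
  have hproper : ∀ w ∈ S, w ≠ [] → w ∈ PaperAux.Pset X → ∃ x ∈ X, w <+: x ∧ w ≠ x := by
    intro w hw hwne hwP
    by_contra hcon
    push_neg at hcon
    have hext : ∀ t, w <+: t → t ∈ PaperAux.Pset X := by
      intro t hwt x hx hxt
      rcases List.prefix_or_prefix_of_prefix hxt hwt with h | h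
      · exact hwP x hx h
      · have hwx : w = x := hcon x hx h
        exact hwP x hx (by rw [← hwx])
    have key : ∀ k : ℕ, ∃ u ∈ S, w <:+ u ∧ k ≤ (PaperAux.SP X u).ncard := by
      intro k
      induction k with
      | zero => exact ⟨w, hw, List.suffix_rfl, Nat.zero_le _⟩
      | succ k ih =>
        obtain ⟨u, hu, hwu, hk⟩ := ih
        obtain ⟨v, hv⟩ := hRec w hw u hu
        have hufull : u <:+ w ++ v ++ u := by
          rw [List.append_assoc]
          exact (List.suffix_append v u).trans (List.suffix_append w (v ++ u))
        have hwfull : w <+: w ++ v ++ u := by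
          rw [List.append_assoc]; exact List.prefix_append w (v ++ u)
        have hfullP : (w ++ v ++ u) ∈ PaperAux.Pset X := hext _ hwfull
        have hnotmem : (w ++ v ++ u) ∉ PaperAux.SP X u := by
          intro hmem
          have h1 := hmem.1.length_le
          have hwlen := List.length_pos_iff.2 hwne
          simp at h1
          omega
        have hsub : insert (w ++ v ++ u) (PaperAux.SP X u) ⊆ PaperAux.SP X (w ++ v ++ u) := by
          intro q hq
          rcases Set.mem_insert_iff.mp hq with rfl | ⟨h1, h2⟩
          · exact ⟨List.suffix_rfl, hfullP⟩
          · exact ⟨h1.trans hufull, h2⟩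
        refine ⟨w ++ v ++ u, hv, hwu.trans hufull, ?_⟩
        calc k + 1 ≤ (insert (w ++ v ++ u) (PaperAux.SP X u)).ncard := by
              rw [Set.ncard_insert_of_notMem hnotmem (PaperAux.SP_finite X u)]; omega
          _ ≤ (PaperAux.SP X (w ++ v ++ u)).ncard :=
              Set.ncard_le_ncard hsub (PaperAux.SP_finite X _)
    obtain ⟨u, hu, _, hk⟩ := key (n + 1)
    have h1 := hdle u hu
    rw [hdX_SP u] at h1
    omega
  have hd2 : ∀ u : List A, u ≠ [] → u ∈ PaperAux.Pset X → 2 ≤ (PaperAux.SP X u).ncard := by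
    intro u hune huP
    have hsub : {[], u} ⊆ PaperAux.SP X u := by
      intro q hq
      rcases Set.mem_insert_iff.mp hq with rfl | hq
      · exact ⟨List.nil_suffix, PaperAux.nil_mem_Pset hnil⟩
      · rw [Set.mem_singleton_iff] at hq
        subst hq
        exact ⟨List.suffix_rfl, huP⟩
    have hcard := Set.ncard_le_ncard hsub (PaperAux.SP_finite X u)
    rwa [Set.ncard_pair (Ne.symm hune)] at hcard
  refine ⟨fun i => {u | u ≠ [] ∧ (∃ x ∈ X, u <+: x ∧ u ≠ x) ∧ dX X u = i.val + 2},
    ?_, ?_, ?_⟩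
  · -- each is an S-maximal suffix code
    intro i
    have hvle : i.val + 2 ≤ n := by have := i.isLt; omega
    refine ⟨?_, ⟨?_, ?_⟩, ?_⟩
    · rintro u ⟨hune, ⟨x, hx, hux, hne⟩, _⟩
      exact hFac u x hux.isInfix (hXS hx)
    · rintro ⟨h, _⟩; exact h rfl
    · rintro u ⟨hune, hprop, hdu⟩ v ⟨hvne, hvprop, hdv⟩ huv
      by_contra hneq
      have huP := hPP u hprop
      have hvP := hPP v hvprop
      have hss : PaperAux.SP X u ⊂ PaperAux.SP X v := by
        constructor
        · rintro q ⟨h1, h2⟩; exact ⟨h1.trans huv, h2⟩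
        · intro hsup
          have hvmem : v ∈ PaperAux.SP X u := hsup ⟨List.suffix_rfl, hvP⟩
          exact hneq (huv.eq_of_length
            (le_antisymm huv.length_le hvmem.1.length_le))
      have hlt := Set.ncard_lt_ncard hss (PaperAux.SP_finite X v)
      rw [← hdX_SP, ← hdX_SP, hdu, hdv] at hlt
      omega
    · -- maximality
      intro Z hZcode hZS hYZ
      apply Set.Subset.antisymm hYZ
      intro w hwZ
      have hwS := hZS hwZ
      have hwne : w ≠ [] := fun h => hZcode.1 (h ▸ hwZ)
      by_cases hcase : i.val + 2 ≤ (PaperAux.SP X w).ncard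
      · obtain ⟨p, hpw, hpP, hpcard⟩ :=
          PaperAux.rank X hnil w.length w le_rfl (i.val + 2) (by omega) hcase
        have hpne : p ≠ [] := by
          rintro rfl
          rw [PaperAux.SP_nil hnil, Set.ncard_singleton] at hpcard
          omega
        have hpS := hFac p w hpw.isInfix hwS
        obtain ⟨x, hx, hpx, hpxne⟩ := hproper p hpS hpne hpP
        have hpY : p ∈ {u | u ≠ [] ∧ (∃ x ∈ X, u <+: x ∧ u ≠ x) ∧ dX X u = i.val + 2} :=
          ⟨hpne, ⟨x, hx, hpx, hpxne⟩, by rw [hdX_SP]; exact hpcard⟩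
        have heq := hZcode.2 p (hYZ hpY) w hwZ hpw
        rw [← heq]
        exact hpY
      · exfalso
        push_neg at hcase
        obtain ⟨v', hv'⟩ := hRec z0 hz0S w hwS
        have hz0w' : z0 <+: z0 ++ v' ++ w := by
          rw [List.append_assoc]; exact List.prefix_append _ _
        have hww' : w <:+ z0 ++ v' ++ w := by
          rw [List.append_assoc]
          exact (List.suffix_append v' w).trans (List.suffix_append z0 _)
        have hnle : n ≤ (PaperAux.SP X (z0 ++ v' ++ w)).ncard := by
          have hq : PaperAux.QP X z0 ⊆ PaperAux.QP X (z0 ++ v' ++ w) := by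
            rintro q ⟨h1, h2⟩; exact ⟨h1.trans hz0w', h2⟩
          have h1 := Set.ncard_le_ncard hq (PaperAux.QP_finite X (z0 ++ v' ++ w))
          rw [← hdX_QP, ← hdX_QP, hz0, hdX_SP] at h1
          exact h1
        obtain ⟨p, hpw', hpP, hpcard⟩ :=
          PaperAux.rank X hnil (z0 ++ v' ++ w).length _ le_rfl (i.val + 2) (by omega)
            (le_trans hvle hnle)
        have hpne : p ≠ [] := by
          rintro rfl
          rw [PaperAux.SP_nil hnil, Set.ncard_singleton] at hpcard
          omega
        have hpS := hFac p _ hpw'.isInfix hv'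
        obtain ⟨x, hx, hpx, hpxne⟩ := hproper p hpS hpne hpP
        have hpY : p ∈ {u | u ≠ [] ∧ (∃ x ∈ X, u <+: x ∧ u ≠ x) ∧ dX X u = i.val + 2} :=
          ⟨hpne, ⟨x, hx, hpx, hpxne⟩, by rw [hdX_SP]; exact hpcard⟩
        rcases List.suffix_or_suffix_of_suffix hpw' hww' with h | h
        · have hsub : PaperAux.SP X p ⊆ PaperAux.SP X w := by
            rintro q ⟨h1, h2⟩; exact ⟨h1.trans h, h2⟩
          have hle2 := Set.ncard_le_ncard hsub (PaperAux.SP_finite X w)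
          omega
        · have heqwp := hZcode.2 w hwZ p (hYZ hpY) h
          rw [← heqwp] at hpcard
          omega
  · -- pairwise disjoint
    intro i j hij
    rw [Function.onFun, Set.disjoint_left]
    rintro u ⟨_, _, h1⟩ ⟨_, _, h2⟩
    exact hij (Fin.ext (by omega))
  · -- the union
    ext u
    simp only [Set.mem_iUnion, Set.mem_setOf_eq]
    constructor
    · rintro ⟨i, hune, hprop, _⟩
      exact ⟨hune, hprop⟩
    · rintro ⟨hune, hprop⟩
      have huP := hPP u hprop
      have huS : u ∈ S := by
        obtain ⟨x, hx, hux, _⟩ := hprop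
        exact hFac u x hux.isInfix (hXS hx)
      have h2 := hd2 u hune huP
      have hle := hdle u huS
      rw [hdX_SP u] at hle
      refine ⟨⟨(PaperAux.SP X u).ncard - 2, by omega⟩, hune, hprop, ?_⟩
      rw [hdX_SP u]
      simp only [Fin.val_mk]
      omega
end

section
/- Let S be a recurrent neutral set over a finite alphabet A with A ⊆ S, and let X ⊆ S be a finite S-maximal bifix code of S-degree n. Then the set P of proper prefixes of words of X satisfies Σ_{p ∈ P} ρ_S(p) = n(Card(A) − χ(S)). -/
namespace Paper

variable {A : Type*}

/-! Auxiliary development -/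

def NoPref (X : Set (List A)) (v : List A) : Prop := ∀ x ∈ X, ¬ x <+: v
def NoSuf (X : Set (List A)) (v : List A) : Prop := ∀ x ∈ X, ¬ x <:+ v

def Pp (X : Set (List A)) : Set (List A) := {p | ∃ x ∈ X, p <+: x ∧ p ≠ x}

lemma finite_prefixes (w : List A) : {p : List A | p <+: w}.Finite := by
  apply Set.Finite.subset ((Set.finite_Iic w.length).image (fun i => w.take i))
  intro p hp
  exact ⟨p.length, hp.length_le, (List.prefix_iff_eq_take.1 hp).symm⟩

lemma finite_suffixes (w : List A) : {p : List A | p <:+ w}.Finite := by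
  apply Set.Finite.subset ((Set.finite_Iic w.length).image (fun i => w.drop i))
  intro p hp
  exact ⟨w.length - p.length, Nat.sub_le _ _, (List.suffix_iff_eq_drop.1 hp).symm⟩

lemma finite_infixes (w : List A) : {p : List A | p <:+: w}.Finite := by
  apply Set.Finite.subset ((finite_prefixes w).biUnion (fun q _ => finite_suffixes q))
  rintro p ⟨s, t, rfl⟩
  exact Set.mem_biUnion (show s ++ p ∈ {q : List A | q <+: s ++ p ++ t} from ⟨t, rfl⟩)
    (show p ∈ {q : List A | q <:+ s ++ p} from ⟨s, rfl⟩)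

lemma parses_finite (X : Set (List A)) (w : List A) : (Parses X w).Finite := by
  apply Set.Finite.subset
    (((finite_prefixes w).prod ((finite_infixes w).prod (finite_suffixes w))))
  rintro ⟨q, m, p⟩ ⟨heq, -, -, -⟩
  refine ⟨⟨m ++ p, by rw [← heq]; simp⟩, ⟨q, p, heq⟩, ⟨q ++ m, by rw [← heq]⟩⟩

lemma instar_nil (X : Set (List A)) : InStar X [] := ⟨[], by simp, rfl⟩

lemma instar_append_right {X : Set (List A)} {m x : List A} (h : InStar X m) (hx : x ∈ X) :
    InStar X (m ++ x) := by
  obtain ⟨l, hl, rfl⟩ := h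
  refine ⟨l ++ [x], ?_, by simp⟩
  intro u hu
  rcases List.mem_append.1 hu with h | h
  · exact hl u h
  · simp at h; exact h ▸ hx

lemma instar_cons {X : Set (List A)} {m x : List A} (hx : x ∈ X) (h : InStar X m) :
    InStar X (x ++ m) := by
  obtain ⟨l, hl, rfl⟩ := h
  refine ⟨x :: l, ?_, by simp⟩
  intro u hu
  rcases List.mem_cons.1 hu with rfl | h
  · exact hx
  · exact hl u h

lemma exists_QX {X : Set (List A)} (hX : [] ∉ X) (u : List A) :
    ∃ q m : List A, q ++ m = u ∧ NoSuf X q ∧ InStar X m := by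
  by_cases h : NoSuf X u
  · exact ⟨u, [], by simp, h, instar_nil X⟩
  · simp only [NoSuf, not_forall, not_not] at h
    obtain ⟨x, hx, u', rfl⟩ := h
    have hxne : x ≠ [] := fun h => hX (h ▸ hx)
    have : u'.length < (u' ++ x).length := by
      simp [List.length_append]
      exact List.length_pos_iff.2 hxne
    obtain ⟨q, m, rfl, hq, hm⟩ := exists_QX hX u'
    exact ⟨q, m ++ x, by simp, hq, instar_append_right hm hx⟩
termination_by u.length

lemma exists_XP {X : Set (List A)} (hX : [] ∉ X) (v : List A) :
    ∃ m p : List A, m ++ p = v ∧ InStar X m ∧ NoPref X p := by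
  by_cases h : NoPref X v
  · exact ⟨[], v, by simp, instar_nil X, h⟩
  · simp only [NoPref, not_forall, not_not] at h
    obtain ⟨x, hx, v', rfl⟩ := h
    have hxne : x ≠ [] := fun h => hX (h ▸ hx)
    have : v'.length < (x ++ v').length := by
      simp [List.length_append]
      exact List.length_pos_iff.2 hxne
    obtain ⟨m, p, rfl, hm, hp⟩ := exists_XP hX v'
    exact ⟨x ++ m, p, by simp, instar_cons hx hm, hp⟩
termination_by v.length

lemma uniq_QX {X : Set (List A)} (hsc : SuffixCode X) (l1 : List (List A)) :
    ∀ (l2 : List (List A)) (q1 q2 : List A),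
      (∀ x ∈ l1, x ∈ X) → (∀ x ∈ l2, x ∈ X) → NoSuf X q1 → NoSuf X q2 →
      q1 ++ l1.flatten = q2 ++ l2.flatten → q1 = q2 := by
  induction l1 using List.reverseRecOn with
  | nil =>
    intro l2 q1 q2 _ h2 hq1 _ heq
    rcases l2.eq_nil_or_concat with rfl | ⟨l2', x, rfl⟩
    · simpa using heq
    · exfalso
      apply hq1 x (h2 x (by simp))
      refine ⟨q2 ++ l2'.flatten, ?_⟩
      simpa using heq.symm
  | append_singleton l1' x1 ih =>
    intro l2 q1 q2 h1 h2 hq1 hq2 heq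
    rcases l2.eq_nil_or_concat with rfl | ⟨l2', x2, rfl⟩
    · exfalso
      apply hq2 x1 (h1 x1 (by simp))
      exact ⟨q1 ++ l1'.flatten, by simpa using heq⟩
    · have hx1 : x1 ∈ X := h1 x1 (by simp)
      have hx2 : x2 ∈ X := h2 x2 (by simp)
      have heq' : (q1 ++ l1'.flatten) ++ x1 = (q2 ++ l2'.flatten) ++ x2 := by
        simpa [List.append_assoc] using heq
      have hs1 : x1 <:+ (q2 ++ l2'.flatten) ++ x2 := heq' ▸ ⟨q1 ++ l1'.flatten, rfl⟩
      have hs2 : x2 <:+ (q2 ++ l2'.flatten) ++ x2 := ⟨q2 ++ l2'.flatten, rfl⟩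
      have hxx : x1 = x2 := by
        rcases List.suffix_or_suffix_of_suffix hs1 hs2 with h | h
        · exact hsc.2 x1 hx1 x2 hx2 h
        · exact (hsc.2 x2 hx2 x1 hx1 h).symm
      subst hxx
      have : q1 ++ l1'.flatten = q2 ++ l2'.flatten := by
        exact List.append_cancel_right heq'
      exact ih l2' q1 q2 (fun x hx => h1 x (by simp [hx])) (fun x hx => h2 x (by simp [hx]))
        hq1 hq2 this

lemma uniq_XP {X : Set (List A)} (hpc : PrefixCode X) (l1 : List (List A)) :
    ∀ (l2 : List (List A)) (p1 p2 : List A),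
      (∀ x ∈ l1, x ∈ X) → (∀ x ∈ l2, x ∈ X) → NoPref X p1 → NoPref X p2 →
      l1.flatten ++ p1 = l2.flatten ++ p2 → p1 = p2 := by
  induction l1 with
  | nil =>
    intro l2 p1 p2 _ h2 hp1 _ heq
    rcases l2 with _ | ⟨x, l2'⟩
    · simpa using heq
    · exfalso
      apply hp1 x (h2 x (by simp))
      exact ⟨l2'.flatten ++ p2, by simpa [List.append_assoc] using heq.symm⟩
  | cons x1 l1' ih =>
    intro l2 p1 p2 h1 h2 hp1 hp2 heq
    rcases l2 with _ | ⟨x2, l2'⟩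
    · exfalso
      apply hp2 x1 (h1 x1 (by simp))
      exact ⟨l1'.flatten ++ p1, by simpa [List.append_assoc] using heq⟩
    · have hx1 : x1 ∈ X := h1 x1 (by simp)
      have hx2 : x2 ∈ X := h2 x2 (by simp)
      have heq' : x1 ++ (l1'.flatten ++ p1) = x2 ++ (l2'.flatten ++ p2) := by
        simpa [List.append_assoc] using heq
      have hpre1 : x1 <+: x2 ++ (l2'.flatten ++ p2) := heq' ▸ ⟨l1'.flatten ++ p1, rfl⟩
      have hpre2 : x2 <+: x2 ++ (l2'.flatten ++ p2) := ⟨l2'.flatten ++ p2, rfl⟩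
      have hxx : x1 = x2 := by
        rcases List.prefix_or_prefix_of_prefix hpre1 hpre2 with h | h
        · exact hpc.2 x1 hx1 x2 hx2 h
        · exact (hpc.2 x2 hx2 x1 hx1 h).symm
      subst hxx
      have : l1'.flatten ++ p1 = l2'.flatten ++ p2 := List.append_cancel_left heq'
      exact ih l2' p1 p2 (fun x hx => h1 x (by simp [hx])) (fun x hx => h2 x (by simp [hx]))
        hp1 hp2 this

end Paper

namespace Paper

variable {A : Type*}

lemma dX_eq_suffix_count {X : Set (List A)} (hX : [] ∉ X) (hsc : SuffixCode X) (w : List A) :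
    dX X w = {p | p <:+ w ∧ NoPref X p}.ncard := by
  have himg : (fun t : List A × List A × List A => t.2.2) '' Parses X w
      = {p | p <:+ w ∧ NoPref X p} := by
    ext p
    constructor
    · rintro ⟨⟨q, m, p'⟩, ⟨heq, hq, hm, hp⟩, rfl⟩
      exact ⟨⟨q ++ m, by rw [← heq]⟩, hp⟩
    · rintro ⟨⟨u, rfl⟩, hp⟩
      obtain ⟨q, m, hqm, hq, hm⟩ := exists_QX hX u
      exact ⟨(q, m, p), ⟨by rw [← hqm], hq, hm, hp⟩, rfl⟩
  have hinj : Set.InjOn (fun t : List A × List A × List A => t.2.2) (Parses X w) := by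
    rintro ⟨q1, m1, p1⟩ ⟨heq1, hq1, hm1, hp1⟩ ⟨q2, m2, p2⟩ ⟨heq2, hq2, hm2, hp2⟩ h
    simp only at h
    subst h
    have hqm : q1 ++ m1 = q2 ++ m2 := List.append_cancel_right (heq1.trans heq2.symm)
    obtain ⟨l1, hl1, rfl⟩ := hm1
    obtain ⟨l2, hl2, rfl⟩ := hm2
    have hq : q1 = q2 := uniq_QX hsc l1 l2 q1 q2 hl1 hl2 hq1 hq2 hqm
    subst hq
    have : l1.flatten = l2.flatten := List.append_cancel_left hqm
    simp [this]
  rw [dX, ← himg, Set.ncard_image_of_injOn hinj]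

lemma dX_eq_prefix_count {X : Set (List A)} (hX : [] ∉ X) (hpc : PrefixCode X) (w : List A) :
    dX X w = {q | q <+: w ∧ NoSuf X q}.ncard := by
  have himg : (fun t : List A × List A × List A => t.1) '' Parses X w
      = {q | q <+: w ∧ NoSuf X q} := by
    ext q
    constructor
    · rintro ⟨⟨q', m, p⟩, ⟨heq, hq, hm, hp⟩, rfl⟩
      exact ⟨⟨m ++ p, by rw [← heq]; simp⟩, hq⟩
    · rintro ⟨⟨v, rfl⟩, hq⟩
      obtain ⟨m, p, hmp, hm, hp⟩ := exists_XP hX v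
      exact ⟨(q, m, p), ⟨by rw [← hmp]; simp, hq, hm, hp⟩, rfl⟩
  have hinj : Set.InjOn (fun t : List A × List A × List A => t.1) (Parses X w) := by
    rintro ⟨q1, m1, p1⟩ ⟨heq1, hq1, hm1, hp1⟩ ⟨q2, m2, p2⟩ ⟨heq2, hq2, hm2, hp2⟩ h
    simp only at h
    subst h
    have hmp : m1 ++ p1 = m2 ++ p2 := by
      have := heq1.trans heq2.symm
      simpa [List.append_assoc] using List.append_cancel_left
        (show q1 ++ (m1 ++ p1) = q1 ++ (m2 ++ p2) by simpa [List.append_assoc] using this)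
    obtain ⟨l1, hl1, rfl⟩ := hm1
    obtain ⟨l2, hl2, rfl⟩ := hm2
    have hp : p1 = p2 := uniq_XP hpc l1 l2 p1 p2 hl1 hl2 hp1 hp2 hmp
    subst hp
    have : l1.flatten = l2.flatten := List.append_cancel_right hmp
    simp [this]
  rw [dX, ← himg, Set.ncard_image_of_injOn hinj]

lemma Pp_noPref {X : Set (List A)} (hpc : PrefixCode X) {p : List A} (hp : p ∈ Pp X) :
    NoPref X p := by
  obtain ⟨x, hx, hpre, hne⟩ := hp
  intro x' hx' hx'p
  have : x' = x := hpc.2 x' hx' x hx (hx'p.trans hpre)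
  subst this
  exact hne (hpre.eq_of_length (Nat.le_antisymm hpre.length_le hx'p.length_le))

/-- Key lemma: in a recurrent set with a bifix code of bounded parse count, every word of `S`
with no prefix in `X` is a proper prefix of an element of `X`. -/
lemma no_escape {S X : Set (List A)} {n : ℕ}
    (hrec : Recurrent S) (hXne : X.Nonempty) (hbc : BifixCode X)
    (hdeg : HasDegree S X n) :
    ∀ y ∈ S, NoPref X y → y ∈ Pp X := by
  classical
  intro y hyS hyP
  by_contra hcon
  have hcon' : ∀ x ∈ X, ¬ y <+: x := by
    intro x hx hpre
    by_cases h : y = x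
    · exact hyP x hx (h ▸ List.prefix_refl y)
    · exact hcon ⟨x, hx, hpre, h⟩
  have hyne : y ≠ [] := by
    obtain ⟨x0, hx0⟩ := hXne
    intro h
    exact hcon' x0 hx0 (h ▸ List.nil_prefix)
  have key : ∀ k : ℕ, ∃ z ∈ S, ∃ T : Finset (List A),
      T.card = k + 1 ∧ ∀ t ∈ T, t <:+ z ∧ y <+: t := by
    intro k
    induction k with
    | zero => exact ⟨y, hyS, {y}, by simp, by simp⟩
    | succ k ih =>
      obtain ⟨z, hzS, T, hcard, hT⟩ := ih
      obtain ⟨v, hzv⟩ := hrec.2.2 z hzS y hyS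
      refine ⟨z ++ v ++ y, hzv, insert y (T.image (· ++ (v ++ y))), ?_, ?_⟩
      · rw [Finset.card_insert_of_notMem, Finset.card_image_of_injective _
          (fun a b h => List.append_cancel_right h), hcard]
        intro hmem
        obtain ⟨t, htT, hty⟩ := Finset.mem_image.1 hmem
        have h1 : y.length ≤ t.length := (hT t htT).2.length_le
        have h2 : 1 ≤ y.length := List.length_pos_iff.2 hyne
        have := congrArg List.length hty
        simp [List.length_append] at this
        omega
      · intro t' ht'
        rcases Finset.mem_insert.1 ht' with rfl | hmem
        · exact ⟨⟨z ++ v, by simp⟩, List.prefix_refl t'⟩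
        · obtain ⟨t, htT, rfl⟩ := Finset.mem_image.1 hmem
          obtain ⟨u, hu⟩ := (hT t htT).1
          exact ⟨⟨u, by rw [← hu]; simp⟩, (hT t htT).2.trans ⟨v ++ y, rfl⟩⟩
  obtain ⟨z, hzS, T, hcard, hT⟩ := key n
  have hsub : ↑T ⊆ {p | p <:+ z ∧ NoPref X p} := by
    intro t ht
    refine ⟨(hT t ht).1, ?_⟩
    intro x hx hxp
    rcases List.prefix_or_prefix_of_prefix hxp (hT t ht).2 with h | h
    · exact hyP x hx h
    · exact hcon' x hx h
  have h1 : n + 1 ≤ dX X z := by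
    rw [dX_eq_suffix_count hbc.1.1 hbc.2 z]
    calc n + 1 = T.card := hcard.symm
    _ = (↑T : Set (List A)).ncard := (Set.ncard_coe_finset T).symm
    _ ≤ _ := Set.ncard_le_ncard hsub
        ((finite_suffixes z).subset (fun p hp => hp.1))
  have h2 : dX X z ≤ n := hdeg.2 ⟨z, hzS, rfl⟩
  omega

end Paper

namespace Paper

variable {A : Type*}

lemma count_n {S X : Set (List A)} {n K : ℕ}
    (hrec : Recurrent S) (hXne : X.Nonempty) (hbc : BifixCode X)
    (hdeg : HasDegree S X n)
    (hK : ∀ p ∈ Pp X, p.length < K) :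
    ∀ w ∈ S, K ≤ w.length → {p | p <:+ w ∧ p ∈ Pp X}.ncard = n := by
  intro w hwS hwK
  obtain ⟨w0, hw0S, hw0d⟩ := hdeg.1
  obtain ⟨v, hzS⟩ := hrec.2.2 w0 hw0S w hwS
  set z := w0 ++ v ++ w with hz
  have hw0z : w0 <+: z := ⟨v ++ w, by simp [hz]⟩
  have hwz : w <:+ z := ⟨w0 ++ v, by simp [hz]⟩
  have hdz_le : dX X z ≤ n := hdeg.2 ⟨z, hzS, rfl⟩
  have hdz_ge : n ≤ dX X z := by
    rw [dX_eq_prefix_count hbc.1.1 hbc.1 z]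
    rw [dX_eq_prefix_count hbc.1.1 hbc.1 w0] at hw0d
    rw [← hw0d]
    apply Set.ncard_le_ncard
    · exact fun q hq => ⟨hq.1.trans hw0z, hq.2⟩
    · exact (finite_prefixes z).subset (fun q hq => hq.1)
  have hdz : dX X z = n := le_antisymm hdz_le hdz_ge
  have hsets : {p | p <:+ z ∧ NoPref X p} = {p | p <:+ w ∧ p ∈ Pp X} := by
    ext p
    constructor
    · rintro ⟨hpz, hpnp⟩
      have hpS : p ∈ S := hrec.2.1 p z hpz.isInfix hzS
      have hpP : p ∈ Pp X := no_escape hrec hXne hbc hdeg p hpS hpnp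
      have hlen : p.length ≤ w.length := le_of_lt (lt_of_lt_of_le (hK p hpP) hwK)
      have hpw : p <:+ w := by
        rcases List.suffix_or_suffix_of_suffix hpz hwz with h | h
        · exact h
        · have : w = p := h.eq_of_length (Nat.le_antisymm h.length_le hlen)
          exact this ▸ List.suffix_refl w
      exact ⟨hpw, hpP⟩
    · rintro ⟨hpw, hpP⟩
      exact ⟨hpw.trans hwz, Pp_noPref hbc.1 hpP⟩
  rw [← hsets, ← dX_eq_suffix_count hbc.1.1 hbc.2 z, hdz]

end Paper

namespace Paper

variable {A : Type*} [Finite A]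

lemma extE_card {S : Set (List A)} (hfac : Factorial S) (p : List A) :
    (extE S p).ncard = ∑ a ∈ (Set.toFinite (extL S p)).toFinset, (extR S (a :: p)).ncard := by
  classical
  have hmem : ∀ q ∈ (Set.toFinite (extE S p)).toFinset,
      q.1 ∈ (Set.toFinite (extL S p)).toFinset := by
    rintro ⟨a, b⟩ hq
    simp only [Set.Finite.mem_toFinset] at hq ⊢
    exact hfac (a :: p) (a :: (p ++ [b])) ⟨[], [b], by simp⟩ hq
  rw [Set.ncard_eq_toFinset_card _ (Set.toFinite _),
    Finset.card_eq_sum_card_fiberwise hmem]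
  apply Finset.sum_congr rfl
  intro a ha
  rw [Set.ncard_eq_toFinset_card _ (Set.toFinite _)]
  apply Finset.card_bij (fun q _ => q.2)
  · rintro ⟨a', b⟩ hq
    simp only [Finset.mem_filter, Set.Finite.mem_toFinset] at hq
    obtain ⟨hq, rfl⟩ := hq
    simpa [extR, extE] using hq
  · rintro ⟨a1, b1⟩ h1 ⟨a2, b2⟩ h2 h
    simp only [Finset.mem_filter] at h1 h2
    simp only at h
    simp [Prod.ext_iff, h, h1.2, h2.2]
  · intro b hb
    simp only [Set.Finite.mem_toFinset, extR] at hb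
    refine ⟨(a, b), ?_, rfl⟩
    simp only [Finset.mem_filter, Set.Finite.mem_toFinset]
    exact ⟨by simpa [extE] using hb, by simp⟩

lemma rho_step {S : Set (List A)} (hfac : Factorial S)
    (hneu : ∀ w ∈ S, w ≠ [] → mS S w = 0) (p : List A) :
    rhoS S p = ∑ a ∈ (Set.toFinite (extL S p)).toFinset, rhoS S (a :: p) := by
  have hE := extE_card hfac p
  have hterm : ∀ a ∈ (Set.toFinite (extL S p)).toFinset,
      rhoS S (a :: p) = ((extR S (a :: p)).ncard : ℤ) - 1 := by
    intro a ha
    have haS : a :: p ∈ S := by simpa [extL] using (Set.Finite.mem_toFinset _).1 ha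
    have h0 := hneu (a :: p) haS (List.cons_ne_nil a p)
    unfold mS at h0
    unfold rhoS
    linarith
  have hL : ((extL S p).ncard : ℤ) = ∑ a ∈ (Set.toFinite (extL S p)).toFinset, (1 : ℤ) := by
    rw [Finset.sum_const, Set.ncard_eq_toFinset_card _ (Set.toFinite _)]
    simp
  calc rhoS S p = ((extE S p).ncard : ℤ) - ((extL S p).ncard : ℤ) := rfl
  _ = ∑ a ∈ (Set.toFinite (extL S p)).toFinset, (((extR S (a :: p)).ncard : ℤ) - 1) := by
      rw [hE, hL, Finset.sum_sub_distrib]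
      push_cast
      ring
  _ = ∑ a ∈ (Set.toFinite (extL S p)).toFinset, rhoS S (a :: p) :=
      Finset.sum_congr rfl (fun a ha => (hterm a ha).symm)

def sfx (S : Set (List A)) (p : List A) (m : ℕ) : Set (List A) :=
  {w | w ∈ S ∧ w.length = m ∧ p <:+ w}

lemma sfx_finite (S : Set (List A)) (p : List A) (m : ℕ) : (sfx S p m).Finite :=
  (List.finite_length_eq A m).subset (fun w hw => hw.2.1)

lemma telescope {S : Set (List A)} (hfac : Factorial S)
    (hneu : ∀ w ∈ S, w ≠ [] → mS S w = 0) {p : List A} (hpS : p ∈ S) :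
    ∀ k : ℕ, rhoS S p = ∑ w ∈ (sfx_finite S p (p.length + k)).toFinset, rhoS S w := by
  classical
  intro k
  induction k with
  | zero =>
    have : (sfx_finite S p (p.length + 0)).toFinset = {p} := by
      ext w
      simp only [Set.Finite.mem_toFinset, sfx, Set.mem_setOf_eq, Finset.mem_singleton]
      constructor
      · rintro ⟨hwS, hlen, hsuf⟩
        exact (hsuf.eq_of_length (by omega)).symm
      · rintro rfl
        exact ⟨hpS, by omega, List.suffix_refl _⟩
    rw [this, Finset.sum_singleton]
  | succ k ih =>
    rw [ih]
    have hbi : (sfx_finite S p (p.length + (k + 1))).toFinset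
        = (sfx_finite S p (p.length + k)).toFinset.biUnion
          (fun w => (Set.toFinite (extL S w)).toFinset.image (· :: w)) := by
      ext w'
      simp only [Set.Finite.mem_toFinset, sfx, Set.mem_setOf_eq, Finset.mem_biUnion,
        Finset.mem_image]
      constructor
      · rintro ⟨hw'S, hlen, hsuf⟩
        rcases w' with _ | ⟨a, w⟩
        · simp only [List.length_nil] at hlen
          omega
        · have hwS : w ∈ S := hfac w (a :: w) (List.suffix_cons a w).isInfix hw'S
          have hwlen : w.length = p.length + k := by
            simp only [List.length_cons] at hlen
            omega
          have hpw : p <:+ w := by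
            rcases List.suffix_or_suffix_of_suffix hsuf (List.suffix_cons a w) with h | h
            · exact h
            · have : w = p := h.eq_of_length (by
                have := h.length_le
                omega)
              exact this ▸ List.suffix_refl w
          exact ⟨w, ⟨hwS, hwlen, hpw⟩, a, by simpa [extL] using hw'S, rfl⟩
      · rintro ⟨w, ⟨hwS, hlen, hsuf⟩, a, haL, rfl⟩
        have : a :: w ∈ S := by simpa [extL] using haL
        exact ⟨this, by simp only [List.length_cons, hlen]; omega,
          hsuf.trans (List.suffix_cons a w)⟩
    have hdisj : (↑(sfx_finite S p (p.length + k)).toFinset : Set (List A)).PairwiseDisjoint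
        (fun w => (Set.toFinite (extL S w)).toFinset.image (· :: w)) := by
      intro w1 _ w2 _ hne
      simp only [Function.onFun, Finset.disjoint_left]
      intro t ht1 ht2
      obtain ⟨a1, _, rfl⟩ := Finset.mem_image.1 ht1
      obtain ⟨a2, _, heq⟩ := Finset.mem_image.1 ht2
      apply hne
      have := congrArg List.tail heq
      simpa using this.symm
    rw [hbi, Finset.sum_biUnion hdisj]
    apply Finset.sum_congr rfl
    intro w hw
    have hwS : w ∈ S := ((Set.Finite.mem_toFinset _).1 hw).1
    rw [rho_step hfac hneu w]
    rw [Finset.sum_image]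
    intro a _ b _ h
    injection h

end Paper

namespace Paper

variable {A : Type*}

lemma Pp_finite {X : Set (List A)} (hXfin : X.Finite) : (Pp X).Finite := by
  apply Set.Finite.subset (hXfin.biUnion (fun x _ => finite_prefixes x))
  rintro p ⟨x, hx, hpre, -⟩
  exact Set.mem_biUnion hx hpre

lemma rho_eps [Fintype A] {S : Set (List A)} (hA : ∀ a : A, [a] ∈ S) :
    rhoS S [] = (Fintype.card A : ℤ) - chiS S := by
  have hr : extR S [] = Set.univ := by
    ext a; simp [extR, hA a]
  unfold rhoS chiS mS
  rw [hr, Set.ncard_univ, Nat.card_eq_fintype_card]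
  ring

end Paper

open Paper in
/-- For a recurrent neutral set `S` containing the alphabet and a finite `S`-maximal
bifix code `X` of `S`-degree `n`, the set `P` of proper prefixes of `X` satisfies
`ρ_S(P) = n (Card A - χ(S))`. -/
theorem rho_of_proper_prefixes_of_maximal_bifix_code
    {A : Type*} [Fintype A] (S X : Set (List A)) (n : ℕ)
    (hS : Recurrent S) (hN : Neutral S) (hA : ∀ a : A, [a] ∈ S)
    (hXfin : X.Finite) (hX : MaxBifixCode S X) (hdeg : HasDegree S X n) :
    (∑ᶠ p ∈ {p : List A | ∃ x ∈ X, p <+: x ∧ p ≠ x}, rhoS S p)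
      = n * ((Fintype.card A : ℤ) - chiS S) := by
  classical
  obtain ⟨hXS, hbc, hmax⟩ := hX
  have hfac : Factorial S := hS.2.1
  have hneu := hN.2
  obtain ⟨w0, hw0S, hw0d⟩ := hdeg.1
  have hnilS : [] ∈ S := hfac [] w0 List.nil_infix hw0S
  have hXne : X.Nonempty := by
    by_contra h
    rw [Set.not_nonempty_iff_eq_empty] at h
    subst h
    have hex : ∃ w ∈ S, w ≠ [] := by
      by_contra hall
      push_neg at hall
      apply hS.1
      ext w
      simp only [Set.mem_singleton_iff]
      exact ⟨fun hw => hall w hw, fun h => h ▸ hnilS⟩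
    obtain ⟨w, hwS, hwne⟩ := hex
    have hmem : ∀ u ∈ ({w} : Set (List A)), ∀ v ∈ ({w} : Set (List A)), u = v := by
      intro u hu v hv
      rw [Set.mem_singleton_iff] at hu hv
      rw [hu, hv]
    have hnil : [] ∉ ({w} : Set (List A)) :=
      fun h => hwne ((Set.mem_singleton_iff.1 h).symm)
    have := hmax {w} ⟨⟨hnil, fun u hu v hv _ => hmem u hu v hv⟩,
        ⟨hnil, fun u hu v hv _ => hmem u hu v hv⟩⟩
      (by intro u hu; rw [Set.mem_singleton_iff] at hu; exact hu ▸ hwS)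
      (by simp)
    exact (Set.singleton_ne_empty w).symm this
  set K := hXfin.toFinset.sup List.length with hKdef
  have hK : ∀ p ∈ Pp X, p.length < K := by
    rintro p ⟨x, hx, hpre, hne⟩
    have h1 : p.length ≤ x.length := hpre.length_le
    have h2 : p.length ≠ x.length := fun h => hne (hpre.eq_of_length h)
    have h3 : x.length ≤ K := Finset.le_sup (hXfin.mem_toFinset.2 hx)
    omega
  have hPfin : (Pp X).Finite := Pp_finite hXfin
  have hcnt := count_n hS hXne hbc hdeg hK
  have hgoal : (∑ᶠ p ∈ {p : List A | ∃ x ∈ X, p <+: x ∧ p ≠ x}, rhoS S p)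
      = ∑ p ∈ hPfin.toFinset, rhoS S p :=
    finsum_mem_eq_finite_toFinset_sum _ hPfin
  rw [hgoal]
  have hPS : ∀ p ∈ hPfin.toFinset, p ∈ S := by
    intro p hp
    obtain ⟨x, hx, hpre, -⟩ := hPfin.mem_toFinset.1 hp
    exact hfac p x hpre.isInfix (hXS hx)
  have step1 : ∑ p ∈ hPfin.toFinset, rhoS S p
      = ∑ p ∈ hPfin.toFinset, ∑ w ∈ (sfx_finite S p K).toFinset, rhoS S w := by
    apply Finset.sum_congr rfl
    intro p hp
    have hple : p.length ≤ K := le_of_lt (hK p (hPfin.mem_toFinset.1 hp))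
    have h := telescope hfac hneu (hPS p hp) (K - p.length)
    rwa [Nat.add_sub_cancel' hple] at h
  have step2 : ∀ p : List A, (sfx_finite S p K).toFinset
      = (sfx_finite S ([] : List A) K).toFinset.filter (fun w => p <:+ w) := by
    intro p
    ext w
    simp only [Set.Finite.mem_toFinset, sfx, Set.mem_setOf_eq, Finset.mem_filter,
      Set.Finite.mem_toFinset]
    constructor
    · rintro ⟨h1, h2, h3⟩; exact ⟨⟨h1, h2, List.nil_suffix⟩, h3⟩
    · rintro ⟨⟨h1, h2, -⟩, h3⟩; exact ⟨h1, h2, h3⟩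
  rw [step1]
  have step2' : ∑ p ∈ hPfin.toFinset, ∑ w ∈ (sfx_finite S p K).toFinset, rhoS S w
      = ∑ w ∈ (sfx_finite S ([] : List A) K).toFinset,
          ∑ p ∈ hPfin.toFinset, if p <:+ w then rhoS S w else 0 := by
    rw [← Finset.sum_comm]
    apply Finset.sum_congr rfl
    intro p _
    rw [step2 p, Finset.sum_filter]
  rw [step2']
  have step3 : ∀ w ∈ (sfx_finite S ([] : List A) K).toFinset,
      (∑ p ∈ hPfin.toFinset, if p <:+ w then rhoS S w else 0) = (n : ℤ) * rhoS S w := by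
    intro w hw
    obtain ⟨hwS, hwlen, -⟩ := (sfx_finite S _ K).mem_toFinset.1 hw
    rw [← Finset.sum_filter, Finset.sum_const]
    have hcard : (hPfin.toFinset.filter (fun p => p <:+ w)).card = n := by
      have h1 := hcnt w hwS (le_of_eq hwlen.symm)
      have h2 : (↑(hPfin.toFinset.filter (fun p => p <:+ w)) : Set (List A))
          = {p | p <:+ w ∧ p ∈ Pp X} := by
        ext p
        simp only [Finset.coe_filter, Set.Finite.mem_toFinset, Set.mem_setOf_eq]
        tauto
      rw [← Set.ncard_coe_finset, h2, h1]
    rw [hcard, nsmul_eq_mul]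
  rw [Finset.sum_congr rfl step3, ← Finset.mul_sum]
  have hteleps := telescope hfac hneu hnilS K
  simp only [List.length_nil, Nat.zero_add] at hteleps
  rw [← hteleps, rho_eps hA]
end

section
/- Let S be a recurrent neutral set over a finite alphabet A with A ⊆ S. For any finite S-maximal bifix code X ⊆ S of S-degree n, one has Card(X) = n(Card(A) − χ(S)) + χ(S). -/
namespace Paper

variable {A : Type*} {X : Set (List A)}

theorem exists_strip_suffix (hX : SuffixCode X) (s : List A) :
    ∃ (q : List A) (l : List (List A)), (∀ u ∈ l, u ∈ X) ∧ q ++ l.flatten = s ∧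
      ∀ x ∈ X, ¬ x <:+ q := by
  suffices H : ∀ n (s : List A), s.length ≤ n →
      ∃ (q : List A) (l : List (List A)), (∀ u ∈ l, u ∈ X) ∧ q ++ l.flatten = s ∧
        ∀ x ∈ X, ¬ x <:+ q from H s.length s le_rfl
  intro n
  induction n with
  | zero =>
    intro s hs
    have : s = [] := List.eq_nil_of_length_eq_zero (Nat.le_zero.mp hs)
    subst this
    exact ⟨[], [], by simp, by simp, fun x hx hsuf => hX.1 (List.suffix_nil.mp hsuf ▸ hx)⟩
  | succ n ih =>
    intro s hs
    by_cases h : ∃ x ∈ X, x <:+ s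
    · obtain ⟨x, hxX, t, ht⟩ := h
      have hxne : x ≠ [] := fun h => hX.1 (h ▸ hxX)
      have htlen : t.length ≤ n := by
        have : t.length + x.length = s.length := by rw [← ht, List.length_append]
        have hx1 : 1 ≤ x.length := List.length_pos_iff.mpr hxne
        omega
      obtain ⟨q, l, hl, hql, hq⟩ := ih t htlen
      refine ⟨q, l ++ [x], ?_, ?_, hq⟩
      · intro u hu; rcases List.mem_append.mp hu with h' | h'
        · exact hl u h'
        · simpa using (List.mem_singleton.mp h') ▸ hxX
      · simp only [List.flatten_append, List.flatten_cons, List.flatten_nil, List.append_nil,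
          ← List.append_assoc, hql, ht]
    · exact ⟨s, [], by simp, by simp, fun x hx hsuf => h ⟨x, hx, hsuf⟩⟩

theorem strip_suffix_unique (hX : SuffixCode X) :
    ∀ (q1 : List A) (l1 : List (List A)) (q2 : List A) (l2 : List (List A)),
      (∀ u ∈ l1, u ∈ X) → (∀ u ∈ l2, u ∈ X) →
      (∀ x ∈ X, ¬ x <:+ q1) → (∀ x ∈ X, ¬ x <:+ q2) →
      q1 ++ List.flatten l1 = q2 ++ List.flatten l2 → q1 = q2 := by
  suffices H : ∀ n (q1 : List A) (l1 : List (List A)) (q2 : List A) (l2 : List (List A)),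
      (q1 ++ List.flatten l1).length ≤ n →
      (∀ u ∈ l1, u ∈ X) → (∀ u ∈ l2, u ∈ X) →
      (∀ x ∈ X, ¬ x <:+ q1) → (∀ x ∈ X, ¬ x <:+ q2) →
      q1 ++ List.flatten l1 = q2 ++ List.flatten l2 → q1 = q2 from
    fun q1 l1 q2 l2 => H _ q1 l1 q2 l2 le_rfl
  intro n
  induction n with
  | zero =>
    intro q1 l1 q2 l2 hlen h1 h2 hq1 hq2 heq
    have e1 : q1 ++ l1.flatten = [] := List.eq_nil_of_length_eq_zero (Nat.le_zero.mp hlen)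
    have e2 : q2 ++ l2.flatten = [] := heq ▸ e1
    rw [(List.append_eq_nil_iff.mp e1).1, (List.append_eq_nil_iff.mp e2).1]
  | succ n ih =>
    intro q1 l1 q2 l2 hlen h1 h2 hq1 hq2 heq
    rcases List.eq_nil_or_concat l1 with hl1 | ⟨l1', x1, hl1⟩ <;>
      rcases List.eq_nil_or_concat l2 with hl2 | ⟨l2', x2, hl2⟩ <;>
      subst hl1 <;> subst hl2 <;> try simp only [List.concat_eq_append] at *
    · simpa using heq
    · exfalso
      apply hq1 x2 (h2 x2 (by simp))
      refine ⟨q2 ++ l2'.flatten, ?_⟩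
      simp only [List.flatten_nil, List.append_nil, List.flatten_append, List.flatten_cons,
        List.append_assoc] at heq ⊢
      exact heq.symm
    · exfalso
      apply hq2 x1 (h1 x1 (by simp))
      refine ⟨q1 ++ l1'.flatten, ?_⟩
      simp only [List.flatten_nil, List.append_nil, List.flatten_append, List.flatten_cons,
        List.append_assoc] at heq ⊢
      exact heq
    · have e1 : q1 ++ (l1' ++ [x1]).flatten = (q1 ++ l1'.flatten) ++ x1 := by
        simp [List.flatten_concat, List.append_assoc]
      have e2 : q2 ++ (l2' ++ [x2]).flatten = (q2 ++ l2'.flatten) ++ x2 := by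
        simp [List.flatten_concat, List.append_assoc]
      rw [e1, e2] at heq
      have hx1X : x1 ∈ X := h1 x1 (by simp)
      have hx2X : x2 ∈ X := h2 x2 (by simp)
      have hs1 : x1 <:+ (q2 ++ l2'.flatten) ++ x2 := heq ▸ ⟨q1 ++ l1'.flatten, rfl⟩
      have hs2 : x2 <:+ (q2 ++ l2'.flatten) ++ x2 := ⟨q2 ++ l2'.flatten, rfl⟩
      have hx12 : x1 = x2 := by
        rcases List.suffix_or_suffix_of_suffix hs1 hs2 with h | h
        · exact hX.2 x1 hx1X x2 hx2X h
        · exact (hX.2 x2 hx2X x1 hx1X h).symm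
      subst hx12
      have heq' : q1 ++ l1'.flatten = q2 ++ l2'.flatten := List.append_cancel_right heq
      have hlen' : (q1 ++ l1'.flatten).length ≤ n := by
        have hx1 : 1 ≤ x1.length := List.length_pos_iff.mpr (fun h => hX.1 (h ▸ hx1X))
        have : ((q1 ++ l1'.flatten) ++ x1).length ≤ n + 1 := e1 ▸ hlen
        rw [List.length_append] at this
        omega
      exact ih q1 l1' q2 l2' hlen' (fun u hu => h1 u (by simp [hu]))
        (fun u hu => h2 u (by simp [hu])) hq1 hq2 heq'

theorem exists_strip_prefix (hX : PrefixCode X) (s : List A) :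
    ∃ (l : List (List A)) (p : List A), (∀ u ∈ l, u ∈ X) ∧ l.flatten ++ p = s ∧
      ∀ x ∈ X, ¬ x <+: p := by
  suffices H : ∀ n (s : List A), s.length ≤ n →
      ∃ (l : List (List A)) (p : List A), (∀ u ∈ l, u ∈ X) ∧ l.flatten ++ p = s ∧
        ∀ x ∈ X, ¬ x <+: p from H s.length s le_rfl
  intro n
  induction n with
  | zero =>
    intro s hs
    have : s = [] := List.eq_nil_of_length_eq_zero (Nat.le_zero.mp hs)
    subst this
    exact ⟨[], [], by simp, by simp, fun x hx hpre => hX.1 (List.prefix_nil.mp hpre ▸ hx)⟩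
  | succ n ih =>
    intro s hs
    by_cases h : ∃ x ∈ X, x <+: s
    · obtain ⟨x, hxX, t, ht⟩ := h
      have hxne : x ≠ [] := fun h => hX.1 (h ▸ hxX)
      have htlen : t.length ≤ n := by
        have : x.length + t.length = s.length := by rw [← ht, List.length_append]
        have hx1 : 1 ≤ x.length := List.length_pos_iff.mpr hxne
        omega
      obtain ⟨l, p, hl, hlp, hp⟩ := ih t htlen
      refine ⟨x :: l, p, ?_, ?_, hp⟩
      · intro u hu; rcases List.mem_cons.mp hu with h' | h'
        · exact h' ▸ hxX
        · exact hl u h'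
      · simp [List.append_assoc, hlp, ht]
    · exact ⟨[], s, by simp, by simp, fun x hx hpre => h ⟨x, hx, hpre⟩⟩

theorem strip_prefix_unique (hX : PrefixCode X) :
    ∀ (l1 : List (List A)) (p1 : List A) (l2 : List (List A)) (p2 : List A),
      (∀ u ∈ l1, u ∈ X) → (∀ u ∈ l2, u ∈ X) →
      (∀ x ∈ X, ¬ x <+: p1) → (∀ x ∈ X, ¬ x <+: p2) →
      List.flatten l1 ++ p1 = List.flatten l2 ++ p2 → p1 = p2 := by
  suffices H : ∀ n (l1 : List (List A)) (p1 : List A) (l2 : List (List A)) (p2 : List A),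
      (List.flatten l1 ++ p1).length ≤ n →
      (∀ u ∈ l1, u ∈ X) → (∀ u ∈ l2, u ∈ X) →
      (∀ x ∈ X, ¬ x <+: p1) → (∀ x ∈ X, ¬ x <+: p2) →
      List.flatten l1 ++ p1 = List.flatten l2 ++ p2 → p1 = p2 from
    fun l1 p1 l2 p2 => H _ l1 p1 l2 p2 le_rfl
  intro n
  induction n with
  | zero =>
    intro l1 p1 l2 p2 hlen h1 h2 hp1 hp2 heq
    have e1 : l1.flatten ++ p1 = [] := List.eq_nil_of_length_eq_zero (Nat.le_zero.mp hlen)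
    have e2 : l2.flatten ++ p2 = [] := heq ▸ e1
    rw [(List.append_eq_nil_iff.mp e1).2, (List.append_eq_nil_iff.mp e2).2]
  | succ n ih =>
    intro l1 p1 l2 p2 hlen h1 h2 hp1 hp2 heq
    rcases l1 with _ | ⟨x1, l1'⟩ <;> rcases l2 with _ | ⟨x2, l2'⟩
    · simpa using heq
    · exfalso
      apply hp1 x2 (h2 x2 (by simp))
      simp only [List.flatten_nil, List.nil_append, List.flatten_cons, List.append_assoc] at heq
      exact ⟨l2'.flatten ++ p2, heq.symm⟩
    · exfalso
      apply hp2 x1 (h1 x1 (by simp))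
      simp only [List.flatten_nil, List.nil_append, List.flatten_cons, List.append_assoc] at heq
      exact ⟨l1'.flatten ++ p1, heq⟩
    · simp only [List.flatten_cons, List.append_assoc] at heq
      have hx1X : x1 ∈ X := h1 x1 (by simp)
      have hx2X : x2 ∈ X := h2 x2 (by simp)
      have hpre1 : x1 <+: x2 ++ (l2'.flatten ++ p2) := heq ▸ ⟨l1'.flatten ++ p1, rfl⟩
      have hpre2 : x2 <+: x2 ++ (l2'.flatten ++ p2) := ⟨l2'.flatten ++ p2, rfl⟩
      have hx12 : x1 = x2 := by
        rcases List.prefix_or_prefix_of_prefix hpre1 hpre2 with h | h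
        · exact hX.2 x1 hx1X x2 hx2X h
        · exact (hX.2 x2 hx2X x1 hx1X h).symm
      subst hx12
      have heq' : l1'.flatten ++ p1 = l2'.flatten ++ p2 := List.append_cancel_left heq
      have hlen' : (l1'.flatten ++ p1).length ≤ n := by
        have hx1 : 1 ≤ x1.length := List.length_pos_iff.mpr (fun h => hX.1 (h ▸ hx1X))
        have : ((x1 :: l1').flatten ++ p1).length ≤ n + 1 := hlen
        simp only [List.flatten_cons, List.append_assoc, List.length_append] at this ⊢
        omega
      exact ih l1' p1 l2' p2 hlen' (fun u hu => h1 u (by simp [hu]))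
        (fun u hu => h2 u (by simp [hu])) hp1 hp2 heq'

/-- The set of suffixes of `w` having no prefix in `X`. -/
def sufS {A : Type*} (X : Set (List A)) (w : List A) : Set (List A) :=
  {p | p <:+ w ∧ ∀ x ∈ X, ¬ x <+: p}

/-- The set of prefixes of `w` having no suffix in `X`. -/
def preS {A : Type*} (X : Set (List A)) (w : List A) : Set (List A) :=
  {q | q <+: w ∧ ∀ x ∈ X, ¬ x <:+ q}

theorem sufS_finite (X : Set (List A)) (w : List A) : (sufS X w).Finite := by
  apply Set.Finite.subset (w.tails.finite_toSet)
  intro p hp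
  simpa [List.mem_tails] using hp.1

theorem preS_finite (X : Set (List A)) (w : List A) : (preS X w).Finite := by
  apply Set.Finite.subset (w.inits.finite_toSet)
  intro p hp
  simpa [List.mem_inits] using hp.1

theorem dX_eq_sufS (hX : BifixCode X) (w : List A) :
    dX X w = (sufS X w).ncard := by
  have himg : (fun t : List A × List A × List A => t.2.2) '' Parses X w = sufS X w := by
    ext p
    constructor
    · rintro ⟨⟨q, m, p'⟩, ⟨heq, hq, hm, hp⟩, rfl⟩
      exact ⟨⟨q ++ m, by simpa [List.append_assoc] using heq⟩, hp⟩
    · rintro ⟨⟨s, hs⟩, hp⟩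
      obtain ⟨q, l, hl, hql, hq⟩ := exists_strip_suffix hX.2 s
      exact ⟨⟨q, l.flatten, p⟩, ⟨by rw [← hs, ← hql], hq, ⟨l, hl, rfl⟩, hp⟩, rfl⟩
  have hinj : Set.InjOn (fun t : List A × List A × List A => t.2.2) (Parses X w) := by
    rintro ⟨q1, m1, p1⟩ ⟨he1, hq1, ⟨l1, hl1, hfl1⟩, hp1⟩
      ⟨q2, m2, p2⟩ ⟨he2, hq2, ⟨l2, hl2, hfl2⟩, hp2⟩ hpp
    dsimp only at *
    subst hpp
    have h12 : (q1 ++ m1) ++ p1 = (q2 ++ m2) ++ p1 := by rw [he1, ← he2]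
    have h12' : q1 ++ m1 = q2 ++ m2 := List.append_cancel_right h12
    rw [← hfl1, ← hfl2] at h12'
    have hq12 : q1 = q2 := strip_suffix_unique hX.2 q1 l1 q2 l2 hl1 hl2 hq1 hq2 h12'
    subst hq12
    have hfl : l1.flatten = l2.flatten := List.append_cancel_left h12'
    have hm : m1 = m2 := by rw [← hfl1, ← hfl2, hfl]
    simp [hm]
  rw [dX, ← himg, Set.ncard_image_of_injOn hinj]

theorem dX_eq_preS (hX : BifixCode X) (w : List A) :
    dX X w = (preS X w).ncard := by
  have himg : (fun t : List A × List A × List A => t.1) '' Parses X w = preS X w := by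
    ext q
    constructor
    · rintro ⟨⟨q', m, p⟩, ⟨heq, hq, hm, hp⟩, rfl⟩
      exact ⟨⟨m ++ p, by simpa [List.append_assoc] using heq⟩, hq⟩
    · rintro ⟨⟨t, ht⟩, hq⟩
      obtain ⟨l, p, hl, hlp, hp⟩ := exists_strip_prefix hX.1 t
      exact ⟨⟨q, l.flatten, p⟩, ⟨by rw [List.append_assoc, hlp, ht], hq, ⟨l, hl, rfl⟩, hp⟩, rfl⟩
  have hinj : Set.InjOn (fun t : List A × List A × List A => t.1) (Parses X w) := by
    rintro ⟨q1, m1, p1⟩ ⟨he1, hq1, ⟨l1, hl1, hfl1⟩, hp1⟩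
      ⟨q2, m2, p2⟩ ⟨he2, hq2, ⟨l2, hl2, hfl2⟩, hp2⟩ hqq
    dsimp only at *
    subst hqq
    have h12 : q1 ++ (m1 ++ p1) = q1 ++ (m2 ++ p2) := by
      rw [← List.append_assoc, ← List.append_assoc, he1, ← he2]
    have h12' : m1 ++ p1 = m2 ++ p2 := List.append_cancel_left h12
    rw [← hfl1, ← hfl2] at h12'
    have hp12 : p1 = p2 := strip_prefix_unique hX.1 l1 p1 l2 p2 hl1 hl2 hp1 hp2 h12'
    subst hp12
    have hfl : l1.flatten = l2.flatten := List.append_cancel_right h12'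
    have hm : m1 = m2 := by rw [← hfl1, ← hfl2, hfl]
    simp [hm]
  rw [dX, ← himg, Set.ncard_image_of_injOn hinj]

theorem nil_mem_sufS (hX : [] ∉ X) (w : List A) : [] ∈ sufS X w :=
  ⟨List.nil_suffix, fun x hx hpre => hX (List.prefix_nil.mp hpre ▸ hx)⟩

theorem dX_pos (hX : BifixCode X) (w : List A) : 1 ≤ dX X w := by
  rw [dX_eq_sufS hX]
  exact (Set.ncard_pos (sufS_finite X w)).mpr ⟨[], nil_mem_sufS hX.1.1 w⟩

theorem dX_nil (hX : BifixCode X) : dX X ([] : List A) = 1 := by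
  rw [dX_eq_sufS hX]
  have : sufS X ([] : List A) = {[]} := by
    apply Set.eq_singleton_iff_unique_mem.mpr
    exact ⟨nil_mem_sufS hX.1.1 [], fun p hp => List.suffix_nil.mp hp.1⟩
  rw [this, Set.ncard_singleton]

theorem dX_le_append_right (hX : BifixCode X) (w t : List A) :
    dX X w ≤ dX X (w ++ t) := by
  rw [dX_eq_preS hX, dX_eq_preS hX]
  apply Set.ncard_le_ncard _ (preS_finite X (w ++ t))
  rintro q ⟨hq, hq2⟩
  exact ⟨hq.trans (List.prefix_append w t), hq2⟩

theorem dX_cons_pos (hX : BifixCode X) (a : A) (w : List A)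
    (h : ∀ x ∈ X, ¬ x <+: (a :: w)) : dX X (a :: w) = dX X w + 1 := by
  rw [dX_eq_sufS hX, dX_eq_sufS hX]
  have hset : sufS X (a :: w) = insert (a :: w) (sufS X w) := by
    ext p
    constructor
    · rintro ⟨hsuf, hpre⟩
      rcases List.suffix_cons_iff.mp hsuf with h' | h'
      · exact Set.mem_insert_iff.mpr (Or.inl h')
      · exact Set.mem_insert_iff.mpr (Or.inr ⟨h', hpre⟩)
    · rintro (rfl | ⟨hsuf, hpre⟩)
      · exact ⟨List.suffix_refl _, h⟩
      · exact ⟨hsuf.trans (List.suffix_cons a w), hpre⟩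
  rw [hset, Set.ncard_insert_of_notMem _ (sufS_finite X w)]
  intro hmem
  have := List.IsSuffix.length_le hmem.1
  simp at this

theorem dX_cons_zero (hX : BifixCode X) (a : A) (w : List A)
    (h : ¬ ∀ x ∈ X, ¬ x <+: (a :: w)) : dX X (a :: w) = dX X w := by
  rw [dX_eq_sufS hX, dX_eq_sufS hX]
  congr 1
  ext p
  constructor
  · rintro ⟨hsuf, hpre⟩
    rcases List.suffix_cons_iff.mp hsuf with h' | h'
    · exact absurd (h' ▸ hpre) h
    · exact ⟨h', hpre⟩
  · rintro ⟨hsuf, hpre⟩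
    exact ⟨hsuf.trans (List.suffix_cons a w), hpre⟩

theorem pump {S : Set (List A)} (hS : Recurrent S) {y : List A} (hyS : y ∈ S)
    (hy : y ≠ []) (hinc : ∀ x ∈ X, ¬ x <+: y ∧ ¬ y <+: x) :
    ∀ k : ℕ, ∃ u ∈ S, k ≤ (sufS X u).ncard := by
  have stepA : ∀ (t : List A), ∀ x ∈ X, ¬ x <+: (y ++ t) := by
    intro t x hx hpre
    rcases List.prefix_or_prefix_of_prefix hpre (List.prefix_append y t) with h | h
    · exact (hinc x hx).1 h
    · exact (hinc x hx).2 h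
  intro k
  induction k with
  | zero => exact ⟨y, hyS, Nat.zero_le _⟩
  | succ k ih =>
    obtain ⟨u, huS, hk⟩ := ih
    obtain ⟨v, huv⟩ := hS.2.2 y hyS u huS
    set u' := y ++ v ++ u with hu'
    have hu'S : u' ∈ S := huv
    refine ⟨u', hu'S, ?_⟩
    have hmem : u' ∈ sufS X u' :=
      ⟨List.suffix_refl _, by rw [hu', List.append_assoc]; exact stepA (v ++ u)⟩
    have hsub : insert u' (sufS X u) ⊆ sufS X u' := by
      rintro p (rfl | ⟨hsuf, hpre⟩)
      · exact hmem
      · exact ⟨hsuf.trans (List.suffix_append (y ++ v) u), hpre⟩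
    have hnotmem : u' ∉ sufS X u := by
      intro hmem'
      have := List.IsSuffix.length_le hmem'.1
      rw [hu'] at this
      simp only [List.length_append] at this
      have : 1 ≤ y.length := List.length_pos_iff.mpr hy
      omega
    calc k + 1 ≤ (sufS X u).ncard + 1 := by omega
      _ = (insert u' (sufS X u)).ncard := (Set.ncard_insert_of_notMem hnotmem (sufS_finite X u)).symm
      _ ≤ (sufS X u').ncard := Set.ncard_le_ncard hsub (sufS_finite X u')

theorem comparable {S : Set (List A)} {n : ℕ} (hS : Recurrent S) (hXb : BifixCode X)
    (hub : ∀ w ∈ S, dX X w ≤ n) {y : List A} (hyS : y ∈ S) (hy : y ≠ []) :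
    ∃ x ∈ X, x <+: y ∨ y <+: x := by
  by_contra hinc
  push_neg at hinc
  obtain ⟨u, huS, hk⟩ := pump hS hyS hy (fun x hx => hinc x hx) (n + 1)
  have : dX X u ≤ n := hub u huS
  rw [dX_eq_sufS hXb] at this
  omega

section FiniteA
variable [Fintype A]

noncomputable def RF (S : Set (List A)) (w : List A) : Finset A :=
  (Set.toFinite (extR S w)).toFinset

noncomputable def LF (S : Set (List A)) (w : List A) : Finset A :=
  (Set.toFinite (extL S w)).toFinset

theorem mem_RF {S : Set (List A)} {w : List A} {a : A} : a ∈ RF S w ↔ w ++ [a] ∈ S := by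
  simp [RF, Set.Finite.mem_toFinset, extR]

theorem mem_LF {S : Set (List A)} {w : List A} {a : A} : a ∈ LF S w ↔ a :: w ∈ S := by
  simp [LF, Set.Finite.mem_toFinset, extL]

theorem RF_card {S : Set (List A)} {w : List A} : (extR S w).ncard = (RF S w).card :=
  Set.ncard_eq_toFinset_card _ _

theorem LF_card {S : Set (List A)} {w : List A} : (extL S w).ncard = (LF S w).card :=
  Set.ncard_eq_toFinset_card _ _

theorem Ecount {S : Set (List A)} (hfac : Factorial S) (w : List A) :
    ((extE S w).ncard : ℤ) = ∑ a ∈ LF S w, ((RF S (a :: w)).card : ℤ) := by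
  classical
  set EF : Finset (A × A) :=
    (LF S w).biUnion (fun a => (RF S (a :: w)).image (fun b => (a, b))) with hEF
  have hset : extE S w = ↑EF := by
    ext ⟨a, b⟩
    simp only [extE, Set.mem_setOf_eq, hEF, Finset.coe_biUnion, Set.mem_iUnion,
      Finset.mem_coe, Finset.mem_image, Finset.mem_biUnion]
    constructor
    · intro h
      have hpre : (a :: w) <+: (a :: (w ++ [b])) := ⟨[b], by simp⟩
      have haw : a :: w ∈ S := hfac _ _ hpre.isInfix h
      exact ⟨a, mem_LF.mpr haw, b, mem_RF.mpr (by simpa using h), rfl⟩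
    · rintro ⟨a', ha', b', hb', heq⟩
      obtain ⟨rfl, rfl⟩ : a' = a ∧ b' = b := by simpa using heq
      simpa using mem_RF.mp hb'
  rw [hset, Set.ncard_coe_finset]
  rw [Finset.card_biUnion]
  · have hcongr : ∀ a ∈ LF S w,
        ((RF S (a :: w)).image (fun b => (a, b))).card = (RF S (a :: w)).card :=
      fun a _ => Finset.card_image_of_injective _ (fun b1 b2 h => by simpa using h)
    rw [Finset.sum_congr rfl hcongr]
    push_cast
    rfl
  · intro a1 _ a2 _ hne
    simp only [Finset.disjoint_left, Finset.mem_image]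
    rintro ⟨x, y⟩ ⟨b1, _, heq1⟩ ⟨b2, _, heq2⟩
    apply hne
    have e1 : a1 = x := (Prod.mk.injEq _ _ _ _).mp heq1 |>.1
    have e2 : a2 = x := (Prod.mk.injEq _ _ _ _).mp heq2 |>.1
    rw [e1, e2]

theorem flow {S : Set (List A)} (hN : Neutral S) {w : List A} (hwS : w ∈ S) (hw : w ≠ []) :
    ∑ a ∈ LF S w, (((RF S (a :: w)).card : ℤ) - 1) = ((RF S w).card : ℤ) - 1 := by
  have hm := hN.2 w hwS hw
  rw [mS] at hm
  have hE := Ecount hN.1 w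
  have hL : ((extL S w).ncard : ℤ) = ((LF S w).card : ℤ) := by rw [LF_card]
  have hR : ((extR S w).ncard : ℤ) = ((RF S w).card : ℤ) := by rw [RF_card]
  rw [Finset.sum_sub_distrib, ← hE, Finset.sum_const, nsmul_eq_mul, mul_one]
  rw [hL, hR] at hm
  linarith [hm, hE]

theorem flow_eps {S : Set (List A)} (hfac : Factorial S) (hA : ∀ a : A, [a] ∈ S) :
    ∑ a ∈ (Finset.univ : Finset A), (((RF S [a]).card : ℤ) - 1)
      = (Fintype.card A : ℤ) - chiS S := by
  have hLuniv : LF S [] = Finset.univ := by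
    ext a; simp [mem_LF, hA a]
  have hRuniv : RF S [] = Finset.univ := by
    ext a; simpa [mem_RF] using hA a
  have hE := Ecount hfac ([] : List A)
  rw [hLuniv] at hE
  have hL : ((extL S ([] : List A)).ncard : ℤ) = (Fintype.card A : ℤ) := by
    rw [LF_card, hLuniv, Finset.card_univ]
  have hR : ((extR S ([] : List A)).ncard : ℤ) = (Fintype.card A : ℤ) := by
    rw [RF_card, hRuniv, Finset.card_univ]
  rw [chiS, mS]
  rw [Finset.sum_sub_distrib, Finset.sum_const, nsmul_eq_mul, mul_one, Finset.card_univ]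
  have : ∑ a ∈ (Finset.univ : Finset A), ((RF S (a :: [])).card : ℤ)
      = ∑ a ∈ (Finset.univ : Finset A), ((RF S [a]).card : ℤ) := rfl
  rw [this] at hE
  linarith [hE, hL, hR]

theorem tree_count {S : Set (List A)} {X P : Set (List A)}
    (hXfin : X.Finite) (hPfin : P.Finite) (hepsP : [] ∈ P)
    (hPiff : ∀ p, p ∈ P ↔ p ∈ S ∧ ∀ x ∈ X, ¬ x <+: p)
    (hXS : X ⊆ S) (hfac : Factorial S) (hXp : PrefixCode X)
    (hcompat : ∀ p ∈ P, ∀ a : A, p ++ [a] ∈ S → p ++ [a] ∈ P ∪ X) :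
    (X.ncard : ℤ) = 1 + ∑ p ∈ hPfin.toFinset, (((RF S p).card : ℤ) - 1) := by
  classical
  set PF := hPfin.toFinset with hPF
  set XF := hXfin.toFinset with hXF
  set T : Finset (List A) := PF.biUnion (fun p => (RF S p).image (fun a => p ++ [a])) with hT
  have happ_inj : ∀ (p1 p2 : List A) (a1 a2 : A),
      p1 ++ [a1] = p2 ++ [a2] → p1 = p2 ∧ a1 = a2 := by
    intro p1 p2 a1 a2 h
    have hl : p1.length = p2.length := by
      have := congrArg List.length h
      simp only [List.length_append, List.length_singleton] at this
      omega
    obtain ⟨h1, h2⟩ := List.append_inj h hl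
    exact ⟨h1, by simpa using h2⟩
  have hTcard : T.card = ∑ p ∈ PF, (RF S p).card := by
    rw [hT, Finset.card_biUnion]
    · exact Finset.sum_congr rfl (fun p _ =>
        Finset.card_image_of_injective _ (fun a1 a2 h => (happ_inj p p a1 a2 h).2))
    · intro p1 _ p2 _ hne
      simp only [Finset.disjoint_left, Finset.mem_image]
      rintro v ⟨a1, _, heq1⟩ ⟨a2, _, heq2⟩
      exact hne ((happ_inj p1 p2 a1 a2 (heq1.trans heq2.symm)).1)
  have hTset : T = (PF ∪ XF).erase [] := by
    ext t
    simp only [hT, Finset.mem_biUnion, Finset.mem_image, Finset.mem_erase, Finset.mem_union,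
      hPF, hXF, Set.Finite.mem_toFinset]
    constructor
    · rintro ⟨p, hp, a, ha, rfl⟩
      have hpP : p ∈ P := hp
      have hpaS : p ++ [a] ∈ S := mem_RF.mp ha
      refine ⟨by simp, ?_⟩
      rcases hcompat p hpP a hpaS with h | h
      · exact Or.inl h
      · exact Or.inr h
    · rintro ⟨htne, ht⟩
      rcases List.eq_nil_or_concat t with rfl | ⟨t', a, rfl⟩
      · exact absurd rfl htne
      · simp only [List.concat_eq_append] at *
        have htS : t' ++ [a] ∈ S := by
          rcases ht with h | h
          · exact ((hPiff _).mp h).1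
          · exact hXS h
        have ht'S : t' ∈ S := hfac t' (t' ++ [a]) (List.prefix_append t' [a]).isInfix htS
        have ht'P : t' ∈ P := by
          rw [hPiff]
          refine ⟨ht'S, ?_⟩
          rcases ht with h | h
          · intro x hx hpre
            exact ((hPiff _).mp h).2 x hx (hpre.trans (List.prefix_append t' [a]))
          · intro x hx hpre
            have hpre' : x <+: t' ++ [a] := hpre.trans (List.prefix_append t' [a])
            have hxt : x = t' ++ [a] := hXp.2 x hx _ h hpre'
            have h1 := hpre.length_le
            have := congrArg List.length hxt
            simp only [List.length_append, List.length_singleton] at this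
            omega
        refine ⟨t', ht'P, a, mem_RF.mpr htS, rfl⟩
  have hdisj : Disjoint PF XF := by
    rw [Finset.disjoint_left]
    intro p hp hpX
    exact ((hPiff p).mp ((Set.Finite.mem_toFinset hPfin).mp hp)).2 p
      ((Set.Finite.mem_toFinset hXfin).mp hpX) (List.prefix_refl p)
  have hepsPF : ([] : List A) ∈ PF ∪ XF :=
    Finset.mem_union_left _ ((Set.Finite.mem_toFinset hPfin).mpr hepsP)
  have hcard2 : T.card + 1 = PF.card + XF.card := by
    rw [hTset, Finset.card_erase_add_one hepsPF, Finset.card_union_of_disjoint hdisj]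
  have hXcard : X.ncard = XF.card := Set.ncard_eq_toFinset_card _ _
  have hsum : ∑ p ∈ PF, (((RF S p).card : ℤ) - 1)
      = (∑ p ∈ PF, ((RF S p).card : ℤ)) - PF.card := by
    rw [Finset.sum_sub_distrib, Finset.sum_const, nsmul_eq_mul, mul_one]
  rw [hXcard, hsum]
  have : ((T.card : ℤ)) = ∑ p ∈ PF, ((RF S p).card : ℤ) := by
    rw [hTcard]; push_cast; rfl
  have hc2 : ((T.card : ℤ)) + 1 = (PF.card : ℤ) + XF.card := by exact_mod_cast hcard2
  linarith

theorem star {S X : Set (List A)} {n L : ℕ}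
    (hN : Neutral S) (hXb : BifixCode X)
    (hlong : ∀ y ∈ S, L ≤ y.length → dX X y = n)
    {P : Set (List A)} (hPiff : ∀ p, p ∈ P ↔ p ∈ S ∧ ∀ x ∈ X, ¬ x <+: p)
    (hPfin : P.Finite) (hPlen : ∀ p ∈ P, p.length < L)
    (hshort : {w | w ∈ S ∧ w.length < L}.Finite)
    (i : ℕ) (hin : i < n) :
    ∑ v ∈ (hshort.toFinset.filter (fun w => dX X w = i ∧ w.length = 1)),
        (((RF S v).card : ℤ) - 1)
      + ∑ p ∈ (hPfin.toFinset.filter (fun p => dX X p = i ∧ 2 ≤ p.length)),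
        (((RF S p).card : ℤ) - 1)
    = ∑ p ∈ (hPfin.toFinset.filter (fun p => dX X p = i + 1 ∧ 2 ≤ p.length)),
        (((RF S p).card : ℤ) - 1) := by
  classical
  set f : List A → ℤ := fun v => ((RF S v).card : ℤ) - 1 with hf
  set SF := hshort.toFinset with hSF
  have hSFmem : ∀ v, v ∈ SF ↔ v ∈ S ∧ v.length < L := by
    intro v; rw [hSF, Set.Finite.mem_toFinset]; rfl
  set PF := hPfin.toFinset with hPF
  have hPFmem : ∀ v, v ∈ PF ↔ v ∈ P := by
    intro v; rw [hPF, Set.Finite.mem_toFinset]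
  set Ti := SF.filter (fun w => dX X w = i ∧ w ≠ []) with hTi
  set Vi := Ti.biUnion (fun w => (LF S w).image (fun a => a :: w)) with hVi
  have hconsinj : ∀ (a1 a2 : A) (w1 w2 : List A), a1 :: w1 = a2 :: w2 → a1 = a2 ∧ w1 = w2 := by
    intro a1 a2 w1 w2 h
    exact ⟨(List.cons.injEq a1 w1 a2 w2 ▸ congrArg id h).1,
      (List.cons.injEq a1 w1 a2 w2 ▸ congrArg id h).2⟩
  -- step 1 : sums over Ti and Vi agree
  have hstep1 : ∑ w ∈ Ti, f w = ∑ v ∈ Vi, f v := by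
    rw [hVi, Finset.sum_biUnion]
    · apply Finset.sum_congr rfl
      intro w hw
      rw [Finset.sum_image (by intro a1 _ a2 _ h; exact (hconsinj a1 a2 w w h).1)]
      obtain ⟨hwSF, hwd, hwne⟩ := by simpa [hTi] using hw
      have hwS : w ∈ S := ((hSFmem w).mp hwSF).1
      have := flow (S := S) hN hwS hwne
      rw [hf]
      simp only
      rw [this]
    · intro w1 h1 w2 h2 hne
      simp only [Finset.disjoint_left, Finset.mem_image]
      rintro v ⟨a1, _, heq1⟩ ⟨a2, _, heq2⟩
      exact hne ((hconsinj a1 a2 w1 w2 (heq1.trans heq2.symm)).2)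
  have hcons : ∀ v : List A, 2 ≤ v.length → ∃ (a : A) (w : List A), v = a :: w ∧ w ≠ [] := by
    intro v hv
    rcases v with _ | ⟨a, w⟩
    · simp at hv
    · exact ⟨a, w, rfl, by intro h; subst h; simp at hv⟩
  -- step 2 : membership in Vi
  have hstep2 : ∀ v, v ∈ Vi ↔ v ∈ S ∧ 2 ≤ v.length ∧ dX X v.tail = i := by
    intro v
    rw [hVi]
    simp only [Finset.mem_biUnion, Finset.mem_image, hTi, Finset.mem_filter]
    constructor
    · rintro ⟨w, ⟨hwSF, hwd, hwne⟩, a, ha, rfl⟩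
      have hwS : a :: w ∈ S := mem_LF.mp ha
      have : 1 ≤ w.length := List.length_pos_iff.mpr hwne
      exact ⟨hwS, by simp; omega, by simpa using hwd⟩
    · rintro ⟨hvS, hvlen, hvd⟩
      rcases v with _ | ⟨a, w⟩
      · simp at hvlen
      · have hwS : w ∈ S := hN.1 w (a :: w) (List.suffix_cons a w).isInfix hvS
        have hwne : w ≠ [] := by
          intro h; rw [h] at hvlen; simp at hvlen
        have hwd : dX X w = i := by simpa using hvd
        have hwlen : w.length < L := by
          by_contra hc
          push_neg at hc
          exact absurd (hlong w hwS hc ▸ hwd) (by omega)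
        exact ⟨w, ⟨(hSFmem w).mpr ⟨hwS, hwlen⟩, hwd, hwne⟩, a, mem_LF.mpr hvS, rfl⟩
  -- step 3 : Vi - filter by no-prefix condition
  have hstep3 : Vi.filter (fun v => ∀ x ∈ X, ¬ x <+: v)
      = PF.filter (fun p => dX X p = i + 1 ∧ 2 ≤ p.length) := by
    ext v
    simp only [Finset.mem_filter, hstep2 v, hPFmem v, hPiff v]
    constructor
    · rintro ⟨⟨hvS, hvlen, hvd⟩, hcond⟩
      refine ⟨⟨hvS, hcond⟩, ?_, hvlen⟩
      obtain ⟨a, w, rfl, hwne⟩ := hcons v hvlen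
      rw [dX_cons_pos hXb a w hcond]
      simpa using hvd
    · rintro ⟨⟨hvS, hcond⟩, hvd, hvlen⟩
      refine ⟨⟨hvS, hvlen, ?_⟩, hcond⟩
      obtain ⟨a, w, rfl, hwne⟩ := hcons v hvlen
      rw [dX_cons_pos hXb a w hcond] at hvd
      simpa using Nat.succ_injective hvd
  -- step 4 : Vi - complement filter
  have hstep4 : Vi.filter (fun v => ¬ ∀ x ∈ X, ¬ x <+: v)
      = Ti.filter (fun v => 2 ≤ v.length ∧ ¬ ∀ x ∈ X, ¬ x <+: v) := by
    ext v
    simp only [Finset.mem_filter, hstep2 v, hTi, Finset.mem_filter, hSFmem v]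
    constructor
    · rintro ⟨⟨hvS, hvlen, hvd⟩, hcond⟩
      have hvd' : dX X v = i := by
        obtain ⟨a, w, rfl, hwne⟩ := hcons v hvlen
        rw [dX_cons_zero hXb a w hcond]; simpa using hvd
      have hvL : v.length < L := by
        by_contra hc
        push_neg at hc
        exact absurd (hlong v hvS hc ▸ hvd') (by omega)
      exact ⟨⟨⟨hvS, hvL⟩, hvd', by intro h; rw [h] at hvlen; simp at hvlen⟩, hvlen, hcond⟩
    · rintro ⟨⟨⟨hvS, hvL⟩, hvd, hvne⟩, hvlen, hcond⟩
      refine ⟨⟨hvS, hvlen, ?_⟩, hcond⟩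
      obtain ⟨a, w, rfl, hwne⟩ := hcons v hvlen
      rw [dX_cons_zero hXb a w hcond] at hvd; simpa using hvd
  -- step 5
  have hstep5 : (Ti.filter (fun v => 2 ≤ v.length)).filter (fun v => ∀ x ∈ X, ¬ x <+: v)
      = PF.filter (fun p => dX X p = i ∧ 2 ≤ p.length) := by
    ext v
    constructor
    · intro h
      have h1 := Finset.mem_filter.mp h
      have h2 := Finset.mem_filter.mp h1.1
      have h3 := Finset.mem_filter.mp h2.1
      exact Finset.mem_filter.mpr ⟨(hPFmem v).mpr ((hPiff v).mpr ⟨((hSFmem v).mp h3.1).1, h1.2⟩),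
        h3.2.1, h2.2⟩
    · intro h
      have h1 := Finset.mem_filter.mp h
      have hvP := (hPFmem v).mp h1.1
      have hvSc := (hPiff v).mp hvP
      have hvlen := h1.2.2
      refine Finset.mem_filter.mpr ⟨Finset.mem_filter.mpr ⟨Finset.mem_filter.mpr
        ⟨(hSFmem v).mpr ⟨hvSc.1, hPlen v hvP⟩, h1.2.1, ?_⟩, hvlen⟩, hvSc.2⟩
      intro hnil
      rw [hnil] at hvlen
      simp at hvlen
  -- step 6 : small-length part of Ti
  have hstep6 : Ti.filter (fun v => ¬ 2 ≤ v.length)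
      = SF.filter (fun w => dX X w = i ∧ w.length = 1) := by
    ext v
    simp only [Finset.mem_filter, hTi, Finset.mem_filter]
    constructor
    · rintro ⟨⟨hvSF, hvd, hvne⟩, hvlen⟩
      have : v.length ≠ 0 := fun h => hvne (List.eq_nil_of_length_eq_zero h)
      exact ⟨hvSF, hvd, by omega⟩
    · rintro ⟨hvSF, hvd, hvlen⟩
      have : v ≠ [] := by intro h; rw [h] at hvlen; simp at hvlen
      exact ⟨⟨hvSF, hvd, this⟩, by omega⟩
  -- assemble
  have e1 : ∑ w ∈ Ti, f w
      = ∑ v ∈ Ti.filter (fun v => 2 ≤ v.length), f v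
        + ∑ v ∈ Ti.filter (fun v => ¬ 2 ≤ v.length), f v :=
    (Finset.sum_filter_add_sum_filter_not Ti _ f).symm
  have e2 : ∑ v ∈ Ti.filter (fun v => 2 ≤ v.length), f v
      = ∑ v ∈ (Ti.filter (fun v => 2 ≤ v.length)).filter (fun v => ∀ x ∈ X, ¬ x <+: v), f v
        + ∑ v ∈ (Ti.filter (fun v => 2 ≤ v.length)).filter (fun v => ¬ ∀ x ∈ X, ¬ x <+: v), f v :=
    (Finset.sum_filter_add_sum_filter_not _ _ f).symm
  have e3 : ∑ v ∈ Vi, f v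
      = ∑ v ∈ Vi.filter (fun v => ∀ x ∈ X, ¬ x <+: v), f v
        + ∑ v ∈ Vi.filter (fun v => ¬ ∀ x ∈ X, ¬ x <+: v), f v :=
    (Finset.sum_filter_add_sum_filter_not _ _ f).symm
  have e4 : (Ti.filter (fun v => 2 ≤ v.length)).filter (fun v => ¬ ∀ x ∈ X, ¬ x <+: v)
      = Ti.filter (fun v => 2 ≤ v.length ∧ ¬ ∀ x ∈ X, ¬ x <+: v) := by
    rw [Finset.filter_filter]
  rw [hstep3] at e3
  rw [hstep4] at e3
  rw [hstep5, e4] at e2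
  rw [hstep6] at e1
  rw [hstep1, e3] at e1
  linarith [e1, e2]

end FiniteA

theorem main_thm {A : Type*} [Fintype A] (S X : Set (List A)) (n : ℕ)
    (hS : Recurrent S) (hN : Neutral S) (hA : ∀ a : A, [a] ∈ S)
    (hXfin : X.Finite) (hX : MaxBifixCode S X) (hdeg : HasDegree S X n) :
    (X.ncard : ℤ) = n * ((Fintype.card A : ℤ) - chiS S) + chiS S := by
  classical
  -- dispose of the empty-alphabet case
  rcases isEmpty_or_nonempty A with hA0 | hA0
  · exfalso
    obtain ⟨w, hwS, -⟩ := hdeg.1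
    have hnil : ∀ l : List A, l = [] := by
      intro l
      rcases l with _ | ⟨a, l⟩
      · rfl
      · exact (IsEmpty.false a).elim
    apply hS.1
    ext u
    simp only [Set.mem_singleton_iff]
    constructor
    · intro _; exact hnil u
    · intro hu; rw [hu, ← hnil w]; exact hwS
  obtain ⟨a0⟩ := hA0
  have hXS : X ⊆ S := hX.1
  have hXb : BifixCode X := hX.2.1
  have hfac : Factorial S := hS.2.1
  have hub : ∀ w ∈ S, dX X w ≤ n := fun w hw => hdeg.2 ⟨w, hw, rfl⟩
  obtain ⟨w0, hw0S, hw0⟩ := hdeg.1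
  have hn1 : 1 ≤ n := hw0 ▸ dX_pos hXb w0
  have hepsS : [] ∈ S := hfac [] [a0] ⟨[], [a0], rfl⟩ (hA a0)
  have hcomp : ∀ y ∈ S, y ≠ [] → ∃ x ∈ X, x <+: y ∨ y <+: x :=
    fun y hy hne => comparable hS hXb hub hy hne
  obtain ⟨x0, hx0X, -⟩ := hcomp [a0] (hA a0) (by simp)
  -- the set of proper prefixes of X
  set P : Set (List A) := {p | p ∈ S ∧ ∀ x ∈ X, ¬ x <+: p} with hPdef
  have hPiff : ∀ p, p ∈ P ↔ p ∈ S ∧ ∀ x ∈ X, ¬ x <+: p := fun p => Iff.rfl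
  have hepsP : [] ∈ P := ⟨hepsS, fun x hx hpre =>
    hXb.1.1 ((List.prefix_nil.mp hpre) ▸ hx)⟩
  have hPprop : ∀ p ∈ P, ∃ x ∈ X, p <+: x ∧ p ≠ x := by
    intro p hp
    by_cases hpe : p = []
    · subst hpe
      exact ⟨x0, hx0X, List.nil_prefix, fun h => hXb.1.1 (h ▸ hx0X)⟩
    · obtain ⟨x, hxX, hor⟩ := hcomp p hp.1 hpe
      rcases hor with h | h
      · exact absurd h (hp.2 x hxX)
      · refine ⟨x, hxX, h, fun he => hp.2 x hxX (he ▸ List.prefix_refl p)⟩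
  set L : ℕ := hXfin.toFinset.sup List.length with hL
  have hPlen : ∀ p ∈ P, p.length < L := by
    intro p hp
    obtain ⟨x, hxX, hpre, hne⟩ := hPprop p hp
    have h1 : p.length ≤ x.length := hpre.length_le
    have h2 : p.length ≠ x.length := fun h => hne (List.IsPrefix.eq_of_length hpre h)
    have h3 : x.length ≤ L := hL ▸ Finset.le_sup (hXfin.mem_toFinset.mpr hxX)
    omega
  have hPfin : P.Finite := (List.finite_length_lt A L).subset (fun p hp => hPlen p hp)
  have hshort : {w | w ∈ S ∧ w.length < L}.Finite :=
    (List.finite_length_lt A L).subset (fun w hw => hw.2)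
  have hsufP : ∀ u ∈ S, sufS X u ⊆ P := by
    intro u hu p hp
    exact ⟨hfac p u hp.1.isInfix hu, hp.2⟩
  -- long words have degree n
  have hlong : ∀ y ∈ S, L ≤ y.length → dX X y = n := by
    intro y hyS hylen
    obtain ⟨v, hUv⟩ := hS.2.2 w0 hw0S y hyS
    have hUS : w0 ++ v ++ y ∈ S := hUv
    have h1 : dX X (w0 ++ v ++ y) = n := by
      refine le_antisymm (hub _ hUS) ?_
      calc n = dX X w0 := hw0.symm
        _ ≤ dX X (w0 ++ (v ++ y)) := dX_le_append_right hXb _ _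
        _ = dX X (w0 ++ v ++ y) := by rw [List.append_assoc]
    have h2 : dX X (w0 ++ v ++ y) ≤ dX X y := by
      rw [dX_eq_sufS hXb, dX_eq_sufS hXb]
      apply Set.ncard_le_ncard _ (sufS_finite X y)
      rintro p hp
      have hpP : p ∈ P := hsufP _ hUS hp
      have hplen : p.length < L := hPlen p hpP
      have hsufy : p <:+ y := by
        rcases List.suffix_or_suffix_of_suffix hp.1 (List.suffix_append (w0 ++ v) y) with h | h
        · exact h
        · have := h.length_le
          omega
      exact ⟨hsufy, hp.2⟩
    have h3 := hub y hyS
    omega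
  -- the prefix-tree count
  have hcompat : ∀ p ∈ P, ∀ a : A, p ++ [a] ∈ S → p ++ [a] ∈ P ∪ X := by
    intro p hp a hpaS
    by_cases hc : ∀ x ∈ X, ¬ x <+: p ++ [a]
    · exact Or.inl ⟨hpaS, hc⟩
    · push_neg at hc
      obtain ⟨x, hxX, hxpre⟩ := hc
      right
      rcases List.prefix_or_prefix_of_prefix hxpre (List.prefix_append p [a]) with h | h
      · exact absurd h (hp.2 x hxX)
      · have h1 : p.length ≤ x.length := h.length_le
        have h2 : x.length ≤ p.length + 1 := by
          have := hxpre.length_le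
          simpa using this
        rcases Nat.lt_or_ge p.length x.length with hlt | hge
        · have hxlen : x.length = (p ++ [a]).length := by simp; omega
          have : x = p ++ [a] := List.IsPrefix.eq_of_length hxpre hxlen
          rwa [← this]
        · have : p = x := List.IsPrefix.eq_of_length h (by omega)
          exact absurd (this ▸ List.prefix_refl p : x <+: p) (hp.2 x hxX)
  have htree : (X.ncard : ℤ) = 1 + ∑ p ∈ hPfin.toFinset, (((RF S p).card : ℤ) - 1) :=
    tree_count hXfin hPfin hepsP hPiff hXS hfac hXb.1 hcompat
  -- level sums
  set f : List A → ℤ := fun v => ((RF S v).card : ℤ) - 1 with hf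
  set PF := hPfin.toFinset with hPF
  have hPFmem : ∀ v, v ∈ PF ↔ v ∈ P := fun v => Set.Finite.mem_toFinset _
  set SF := hshort.toFinset with hSF
  have hSFmem : ∀ v, v ∈ SF ↔ v ∈ S ∧ v.length < L := fun v => Set.Finite.mem_toFinset _
  set Bf : ℕ → ℤ := fun i => ∑ p ∈ PF.filter (fun p => dX X p = i), f p with hBf
  have htotal : ∑ p ∈ PF, f p = ∑ i ∈ Finset.Icc 1 n, Bf i := by
    rw [hBf]
    exact (Finset.sum_fiberwise_of_maps_to (fun p hp => Finset.mem_Icc.mpr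
      ⟨dX_pos hXb p, hub p ((hPFmem p).mp hp).1⟩) f).symm
  -- value of B 1
  have hP1 : PF.filter (fun p => dX X p = 1) = {[]} := by
    ext p
    simp only [Finset.mem_filter, Finset.mem_singleton, hPFmem p]
    constructor
    · rintro ⟨hpP, hpd⟩
      rcases p with _ | ⟨a, w⟩
      · rfl
      · rw [dX_cons_pos hXb a w hpP.2] at hpd
        have := dX_pos hXb w
        omega
    · rintro rfl
      exact ⟨hepsP, dX_nil hXb⟩
  have hRFnil : (RF S ([] : List A)).card = Fintype.card A := by
    rw [← Finset.card_univ]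
    congr 1
    ext a
    simpa [mem_RF] using hA a
  have hB1 : Bf 1 = (Fintype.card A : ℤ) - 1 := by
    rw [hBf]
    simp only [hP1, Finset.sum_singleton, hf, hRFnil]
  -- letters
  set AF : Finset (List A) := Finset.univ.image (fun a : A => [a]) with hAF
  have hAFmem : ∀ v, v ∈ AF ↔ ∃ a : A, v = [a] := by
    intro v
    simp only [hAF, Finset.mem_image, Finset.mem_univ, true_and]
    exact ⟨fun ⟨a, h⟩ => ⟨a, h.symm⟩, fun ⟨a, h⟩ => ⟨a, h.symm⟩⟩
  have hdXletter : ∀ a : A, ([a] ∈ X → dX X [a] = 1) ∧ ([a] ∉ X → dX X [a] = 2) := by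
    intro a
    constructor
    · intro haX
      have : ¬ ∀ x ∈ X, ¬ x <+: [a] := by
        push_neg
        exact ⟨[a], haX, List.prefix_refl _⟩
      rw [show (a :: ([] : List A)) = [a] from rfl] at *
      rw [← show (a :: ([] : List A)) = [a] from rfl, dX_cons_zero hXb a [] this, dX_nil hXb]
    · intro haX
      have hcond : ∀ x ∈ X, ¬ x <+: [a] := by
        intro x hxX hpre
        have hxne : x ≠ [] := fun h => hXb.1.1 (h ▸ hxX)
        have h1 : 1 ≤ x.length := List.length_pos_iff.mpr hxne
        have h2 : x.length ≤ 1 := by simpa using hpre.length_le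
        have : x = [a] := List.IsPrefix.eq_of_length hpre (by simp; omega)
        exact haX (this ▸ hxX)
      rw [← show (a :: ([] : List A)) = [a] from rfl, dX_cons_pos hXb a [] hcond, dX_nil hXb]
  have hletterP : ∀ a : A, ([a] ∈ P ↔ [a] ∉ X) := by
    intro a
    constructor
    · intro hp hX'
      exact hp.2 [a] hX' (List.prefix_refl _)
    · intro hnX
      refine ⟨hA a, ?_⟩
      intro x hxX hpre
      have hxne : x ≠ [] := fun h => hXb.1.1 (h ▸ hxX)
      have h1 : 1 ≤ x.length := List.length_pos_iff.mpr hxne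
      have h2 : x.length ≤ 1 := by simpa using hpre.length_le
      have : x = [a] := List.IsPrefix.eq_of_length hpre (by simp; omega)
      exact hnX (this ▸ hxX)
  -- value of B 2 (when 2 ≤ n)
  have hB2 : 2 ≤ n → Bf 2 = (Fintype.card A : ℤ) - chiS S := by
    intro hn2
    have hstar1 := star hN hXb hlong hPiff hPfin hPlen hshort 1 (by omega)
    -- identify the three finsets
    have hT11 : SF.filter (fun w => dX X w = 1 ∧ w.length = 1)
        = AF.filter (fun v => v ∈ X) := by
      ext v
      simp only [Finset.mem_filter, hSFmem v, hAFmem v]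
      constructor
      · rintro ⟨⟨hvS, hvL⟩, hvd, hvlen⟩
        obtain ⟨a, rfl⟩ := List.length_eq_one_iff.mp hvlen
        refine ⟨⟨a, rfl⟩, ?_⟩
        by_contra hnX
        rw [(hdXletter a).2 hnX] at hvd
        omega
      · rintro ⟨⟨a, rfl⟩, hvX⟩
        have hd1 : dX X [a] = 1 := (hdXletter a).1 hvX
        have hlen : ([a] : List A).length < L := by
          by_contra hc
          push_neg at hc
          rw [hlong [a] (hXS hvX) hc] at hd1
          omega
        exact ⟨⟨hXS hvX, hlen⟩, hd1, rfl⟩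
    have hP1e : PF.filter (fun p => dX X p = 1 ∧ 2 ≤ p.length) = ∅ := by
      ext p
      simp only [Finset.mem_filter, Finset.notMem_empty, iff_false, not_and, hPFmem p]
      intro hpP hpd
      have hm : p ∈ PF.filter (fun p => dX X p = 1) :=
        Finset.mem_filter.mpr ⟨(hPFmem p).mpr hpP, hpd⟩
      rw [hP1, Finset.mem_singleton] at hm
      subst hm
      simp
    have hP2small : PF.filter (fun p => dX X p = 2 ∧ ¬ 2 ≤ p.length)
        = AF.filter (fun v => v ∉ X) := by
      ext p
      simp only [Finset.mem_filter, hPFmem p, hAFmem p]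
      constructor
      · rintro ⟨hpP, hpd, hplen⟩
        have hpne : p ≠ [] := by
          intro h
          rw [h, dX_nil hXb] at hpd
          omega
        have : p.length = 1 := by
          have : p.length ≠ 0 := fun h => hpne (List.eq_nil_of_length_eq_zero h)
          omega
        obtain ⟨a, rfl⟩ := List.length_eq_one_iff.mp this
        exact ⟨⟨a, rfl⟩, (hletterP a).mp hpP⟩
      · rintro ⟨⟨a, rfl⟩, hnX⟩
        exact ⟨(hletterP a).mpr hnX, (hdXletter a).2 hnX, by simp⟩
    have hsplit2 : Bf 2 = ∑ p ∈ PF.filter (fun p => dX X p = 2 ∧ 2 ≤ p.length), f p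
        + ∑ p ∈ PF.filter (fun p => dX X p = 2 ∧ ¬ 2 ≤ p.length), f p := by
      rw [hBf]
      simp only
      rw [← Finset.sum_filter_add_sum_filter_not (PF.filter (fun p => dX X p = 2))
        (fun p => 2 ≤ p.length) f, Finset.filter_filter, Finset.filter_filter]
    have hAFsplit : ∑ v ∈ AF.filter (fun v => v ∈ X), f v
        + ∑ v ∈ AF.filter (fun v => v ∉ X), f v = ∑ v ∈ AF, f v :=
      Finset.sum_filter_add_sum_filter_not AF _ f
    have hAFsum : ∑ v ∈ AF, f v = (Fintype.card A : ℤ) - chiS S := by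
      rw [hAF, Finset.sum_image (by intro a _ b _ h; simpa using h)]
      exact flow_eps hfac hA
    rw [hT11, hP1e, Finset.sum_empty, add_zero] at hstar1
    rw [hsplit2, hP2small, ← hstar1]
    linarith [hAFsplit, hAFsum]
  -- the chain B i = B (i+1)
  have hchainstep : ∀ i, 2 ≤ i → i < n → Bf i = Bf (i + 1) := by
    intro i hi2 hin
    have hstari := star hN hXb hlong hPiff hPfin hPlen hshort i hin
    have hsmalleq : SF.filter (fun w => dX X w = i ∧ w.length = 1)
        = PF.filter (fun p => dX X p = i ∧ ¬ 2 ≤ p.length) := by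
      ext v
      simp only [Finset.mem_filter, hSFmem v, hPFmem v]
      constructor
      · rintro ⟨⟨hvS, hvL⟩, hvd, hvlen⟩
        obtain ⟨a, rfl⟩ := List.length_eq_one_iff.mp hvlen
        have : [a] ∉ X := by
          intro hX'
          rw [(hdXletter a).1 hX'] at hvd
          omega
        exact ⟨(hletterP a).mpr this, hvd, by simp⟩
      · rintro ⟨hvP, hvd, hvlen⟩
        have hvne : v ≠ [] := by
          intro h
          rw [h, dX_nil hXb] at hvd
          omega
        have hv1 : v.length = 1 := by
          have : v.length ≠ 0 := fun h => hvne (List.eq_nil_of_length_eq_zero h)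
          omega
        exact ⟨⟨hvP.1, hPlen v hvP⟩, hvd, hv1⟩
    have hBi : Bf i = ∑ p ∈ PF.filter (fun p => dX X p = i ∧ 2 ≤ p.length), f p
        + ∑ p ∈ PF.filter (fun p => dX X p = i ∧ ¬ 2 ≤ p.length), f p := by
      rw [hBf]
      simp only
      rw [← Finset.sum_filter_add_sum_filter_not (PF.filter (fun p => dX X p = i))
        (fun p => 2 ≤ p.length) f, Finset.filter_filter, Finset.filter_filter]
    have hBi1small : PF.filter (fun p => dX X p = i + 1 ∧ ¬ 2 ≤ p.length) = ∅ := by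
      ext p
      simp only [Finset.mem_filter, Finset.notMem_empty, iff_false, not_and, hPFmem p]
      intro hpP hpd
      by_contra hlen
      push_neg at hlen
      have hpne : p ≠ [] := by
        intro h
        rw [h, dX_nil hXb] at hpd
        omega
      have hp1 : p.length = 1 := by
        have h0 : p.length ≠ 0 := fun h => hpne (List.eq_nil_of_length_eq_zero h)
        omega
      obtain ⟨a, rfl⟩ := List.length_eq_one_iff.mp hp1
      have : [a] ∉ X := (hletterP a).mp hpP
      rw [(hdXletter a).2 this] at hpd
      omega
    have hBi1 : Bf (i + 1) = ∑ p ∈ PF.filter (fun p => dX X p = i + 1 ∧ 2 ≤ p.length), f p := by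
      rw [hBf]
      simp only
      rw [← Finset.sum_filter_add_sum_filter_not (PF.filter (fun p => dX X p = i + 1))
        (fun p => 2 ≤ p.length) f, Finset.filter_filter, Finset.filter_filter, hBi1small,
        Finset.sum_empty, add_zero]
    rw [hBi, hBi1, ← hstari, hsmalleq]
    ring
  have hchain : ∀ i, 2 ≤ i → i ≤ n → Bf i = (Fintype.card A : ℤ) - chiS S := by
    intro i
    induction i with
    | zero => omega
    | succ k ih =>
      intro h2 hn'
      rcases Nat.lt_or_ge k 2 with hk | hk
      · have : k + 1 = 2 := by omega
        rw [this]
        exact hB2 (by omega)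
      · rw [← hchainstep k hk (by omega)]
        exact ih (by omega) (by omega)
  -- final assembly
  have hIcc : Finset.Icc 1 n = insert 1 (Finset.Icc 2 n) := by
    ext i
    simp only [Finset.mem_Icc, Finset.mem_insert, Finset.mem_Icc]
    omega
  have h1notin : (1 : ℕ) ∉ Finset.Icc 2 n := by simp
  have htail : ∑ i ∈ Finset.Icc 2 n, Bf i = ((n : ℤ) - 1) * ((Fintype.card A : ℤ) - chiS S) := by
    rcases Nat.lt_or_ge n 2 with hn2 | hn2
    · have : n = 1 := by omega
      subst this
      simp
    · rw [Finset.sum_congr rfl (fun i hi => hchain i (Finset.mem_Icc.mp hi).1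
        (Finset.mem_Icc.mp hi).2)]
      rw [Finset.sum_const, Nat.card_Icc, nsmul_eq_mul]
      congr 1
      push_cast
      omega
  rw [htree, htotal, hIcc, Finset.sum_insert h1notin, hB1, htail]
  ring

end Paper


open Paper in
/-- Cardinality theorem for bifix codes: in a recurrent neutral set `S` containing the
alphabet, any finite `S`-maximal bifix code `X` of `S`-degree `n` satisfies
`Card(X) = n (Card A - χ(S)) + χ(S)`. -/
theorem card_of_maximal_bifix_code
    {A : Type*} [Fintype A] (S X : Set (List A)) (n : ℕ)
    (hS : Recurrent S) (hN : Neutral S) (hA : ∀ a : A, [a] ∈ S)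
    (hXfin : X.Finite) (hX : MaxBifixCode S X) (hdeg : HasDegree S X n) :
    (X.ncard : ℤ) = n * ((Fintype.card A : ℤ) - chiS S) + chiS S :=
  Paper.main_thm S X n hS hN hA hXfin hX hdeg
end

section
/- Let S be a uniformly recurrent set of words over a finite alphabet A and let X ⊆ S be a finite set of nonempty words. Then the set CR_S(X) of complete first return words to X in S is finite. -/
open Paper in
/-- For a uniformly recurrent set `S` and a finite set `X ⊆ S` of nonempty words,
the set `CR_S(X)` of complete first return words to `X` is finite. -/
theorem CR_finite_of_uniformly_recurrent
    {A : Type*} [Fintype A] (S X : Set (List A))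
    (hS : UniformlyRecurrent S) (hXS : X ⊆ S) (hX : ∀ x ∈ X, x ≠ [])
    (hXfin : X.Finite) :
    (CR S X).Finite := by
  rcases X.eq_empty_or_nonempty with rfl | ⟨x, hx⟩
  · have : CR S ∅ = ∅ := by
      ext w; simp [CR]
    simp [this]
  obtain ⟨n, hn1, hn⟩ := hS.2.2 x (hXS hx)
  apply (List.finite_length_le A (n + 1)).subset
  intro w hw
  simp only [Set.mem_setOf_eq]
  by_contra hlen
  push_neg at hlen
  obtain ⟨hwS, -, -, hint⟩ := hw
  -- w has length ≥ n + 2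
  obtain ⟨a, t, rfl⟩ : ∃ a t, w = a :: t := by
    cases w with
    | nil => simp at hlen
    | cons a t => exact ⟨a, t, rfl⟩
  have ht : t ≠ [] := by
    intro h; subst h; simp at hlen
  obtain ⟨m, b, hmb⟩ : ∃ m b, t = m ++ [b] := ⟨t.dropLast, t.getLast ht, (t.dropLast_append_getLast ht).symm⟩
  have hm : n ≤ m.length := by
    have := hlen
    subst hmb
    simp at this ⊢
    omega
  have hmS : m ∈ S := hS.2.1 m _ ⟨[a], [b], by simp [hmb]⟩ hwS
  have hpS : m.take n ∈ S := hS.2.1 _ m (m.take_prefix n).isInfix hmS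
  have hxm : x <:+: m := by
    have := hn (m.take n) hpS (by simp [hm])
    exact this.trans (m.take_prefix n).isInfix
  obtain ⟨l, r, hlr⟩ := hxm
  exact hint x ⟨a :: l, r ++ [b], by simp, by simp, by
    simp only [hmb, ← hlr]; simp⟩ hx
end
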